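/- arXiv:1509.04549 — 5 statements merged into one kernel-verified Lean document; each statement's English description precedes it below -/
import Mathlib

section
/- Let X_0, ..., X_{n-1} be 4-wise independent {0,1}-valued random variables, X = Σ X_i, and μ = E[X] ≥ 1. Then E[(X - μ)^4] ≤ 4μ². -/
open MeasureTheory ProbabilityTheory


lemma integrable_of_bdd {Ω : Type*} [MeasurableSpace Ω] {μ : Measure Ω} [IsProbabilityMeasure μ]
    {f : Ω → ℝ} (hf : Measurable f) (h : ∀ ω, |f ω| ≤ 1) : Integrable f μ := by
  refine (integrable_const (1:ℝ)).mono' hf.aestronglyMeasurable ?_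
  filter_upwards with ω
  simpa using h ω

lemma int_prod {Ω ι : Type*} [MeasurableSpace Ω] (μ : Measure Ω) [IsProbabilityMeasure μ]
    (Z : ι → Ω → ℝ)
    (h : iIndepFun Z μ)
    (hm : ∀ i, Measurable (Z i)) (t : Finset ι) :
    ∫ ω, ∏ i ∈ t, Z i ω ∂μ = ∏ i ∈ t, ∫ ω, Z i ω ∂μ := by
  classical
  induction t using Finset.induction_on with
  | empty => simp
  | @insert a t ha ih =>
    have happ : ∀ ω, (∏ i ∈ t, Z i) ω = ∏ i ∈ t, Z i ω := fun ω => by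
      simp [Finset.prod_apply]
    have hprodmeas : Measurable (∏ i ∈ t, Z i) := by
      have : (∏ i ∈ t, Z i) = fun ω => ∏ i ∈ t, Z i ω := funext happ
      rw [this]
      exact Finset.measurable_prod t fun i _ => hm i
    have hindep : IndepFun (∏ i ∈ t, Z i) (Z a) μ :=
      h.indepFun_finsetProd_of_notMem hm ha
    have hmul := hindep.integral_mul_eq_mul_integral hprodmeas.aestronglyMeasurable (hm a).aestronglyMeasurable
    have h1 : ∫ ω, ∏ i ∈ insert a t, Z i ω ∂μ = ∫ ω, ((∏ i ∈ t, Z i) * Z a) ω ∂μ := by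
      congr 1; funext ω
      simp only [Pi.mul_apply, happ ω, Finset.prod_insert ha, mul_comm]
    rw [h1, hmul, Finset.prod_insert ha, mul_comm]
    congr 1
    rw [show (∏ i ∈ t, Z i) = fun ω => ∏ i ∈ t, Z i ω from funext happ, ih]


lemma ML {Ω : Type*} [MeasurableSpace Ω] (μ : Measure Ω) [IsProbabilityMeasure μ]
    {n : ℕ} (Y : Fin n → Ω → ℝ) (hYm : ∀ i, Measurable (Y i)) (s : Finset (Fin n))
    (hind : iIndepFun (fun i : s => Y i.1) μ)
    (c : Fin n → ℕ) :
    ∫ ω, ∏ i ∈ s, (Y i ω)^(c i) ∂μ = ∏ i ∈ s, ∫ ω, (Y i ω)^(c i) ∂μ := by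
  have hZ : iIndepFun
      (fun i : s => fun ω => (Y i.1 ω)^(c i.1)) μ := by
    have := hind.comp (fun i : s => fun x : ℝ => x ^ (c i.1))
      (fun i => measurable_id.pow_const _)
    exact this
  have hmZ : ∀ i : s, Measurable (fun ω => (Y i.1 ω)^(c i.1)) :=
    fun i => (hYm i.1).pow_const _
  have h := int_prod μ _ hZ hmZ Finset.univ
  calc ∫ ω, ∏ i ∈ s, (Y i ω)^(c i) ∂μ
      = ∫ ω, ∏ i ∈ (Finset.univ : Finset s), (Y i.1 ω)^(c i.1) ∂μ := by
        congr 1; funext ω; exact (Finset.prod_coe_sort s (fun i => (Y i ω)^(c i))).symm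
    _ = ∏ i ∈ (Finset.univ : Finset s), ∫ ω, (Y i.1 ω)^(c i.1) ∂μ := h
    _ = ∏ i ∈ s, ∫ ω, (Y i ω)^(c i) ∂μ :=
        Finset.prod_coe_sort s (fun i => ∫ ω, (Y i ω)^(c i) ∂μ)


lemma main_aux {Ω : Type*} [MeasurableSpace Ω] (μ : Measure Ω) [IsProbabilityMeasure μ]
    {n : ℕ} (Y : Fin n → Ω → ℝ) (hYm : ∀ i, Measurable (Y i))
    (hbd : ∀ i ω, |Y i ω| ≤ 1) (hzero : ∀ i, ∫ ω, Y i ω ∂μ = 0)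
    (hind : ∀ s : Finset (Fin n), s.card ≤ 4 →
      iIndepFun (fun i : s => Y i.1) μ) :
    ∫ ω, (∑ i, Y i ω)^4 ∂μ ≤
      (∑ i, ∫ ω, (Y i ω)^2 ∂μ) + 3 * (∑ i, ∫ ω, (Y i ω)^2 ∂μ)^2 := by
  classical
  set σ : Fin n → ℝ := fun i => ∫ ω, (Y i ω)^2 ∂μ with hσ
  -- basic facts
  have hbdpow : ∀ (i : Fin n) (k : ℕ) (ω : Ω), |Y i ω ^ k| ≤ 1 := by
    intro i k ω
    rw [abs_pow]
    exact pow_le_one₀ (abs_nonneg _) (hbd i ω)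
  have hintpow : ∀ (i : Fin n) (k : ℕ), Integrable (fun ω => Y i ω ^ k) μ :=
    fun i k => integrable_of_bdd ((hYm i).pow_const _) (hbdpow i k)
  have hσ0 : ∀ i, 0 ≤ σ i := fun i => integral_nonneg fun ω => sq_nonneg _
  have hM1 : ∀ i, ∫ ω, Y i ω ^ 1 ∂μ = 0 := by
    intro i; simp only [pow_one]; exact hzero i
  have hM4 : ∀ i, ∫ ω, Y i ω ^ 4 ∂μ ≤ σ i := by
    intro i
    refine integral_mono (hintpow i 4) (hintpow i 2) fun ω => ?_
    have h1 := abs_le.1 (hbd i ω)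
    have h2 : Y i ω ^ 2 ≤ 1 := by nlinarith [h1.1, h1.2]
    nlinarith [mul_nonneg (sq_nonneg (Y i ω)) (sub_nonneg.2 h2)]
  -- K lemmas
  have K2 : ∀ (i j : Fin n) (a b : ℕ), i ≠ j →
      ∫ ω, Y i ω ^ a * Y j ω ^ b ∂μ = (∫ ω, Y i ω ^ a ∂μ) * ∫ ω, Y j ω ^ b ∂μ := by
    intro i j a b hij
    have hcard : ({i, j} : Finset (Fin n)).card ≤ 4 := by
      rw [Finset.card_pair hij]; norm_num
    have h := ML μ Y hYm {i, j} (hind _ hcard) (fun t => if t = i then a else b)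
    simp only [Finset.prod_pair hij, if_pos rfl, if_neg (Ne.symm hij)] at h
    exact h
  have K3 : ∀ (i j k : Fin n) (a b c : ℕ), i ≠ j → i ≠ k → j ≠ k →
      ∫ ω, Y i ω ^ a * Y j ω ^ b * Y k ω ^ c ∂μ =
        (∫ ω, Y i ω ^ a ∂μ) * (∫ ω, Y j ω ^ b ∂μ) * ∫ ω, Y k ω ^ c ∂μ := by
    intro i j k a b c hij hik hjk
    have hcard : ({i, j, k} : Finset (Fin n)).card ≤ 4 := by
      calc ({i, j, k} : Finset (Fin n)).card ≤ ({j, k} : Finset (Fin n)).card + 1 :=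
            Finset.card_insert_le _ _
        _ ≤ 4 := by rw [Finset.card_pair hjk]; norm_num
    have hnotmem : i ∉ ({j, k} : Finset (Fin n)) := by simp [hij, hik]
    have h := ML μ Y hYm {i, j, k} (hind _ hcard)
      (fun t => if t = i then a else if t = j then b else c)
    simp only [Finset.prod_insert hnotmem, Finset.prod_pair hjk, if_pos rfl, ite_true,
      if_neg (Ne.symm hij), if_neg (Ne.symm hik), if_neg (Ne.symm hjk)] at h
    have heq : ∀ ω : Ω, Y i ω ^ a * Y j ω ^ b * Y k ω ^ c
        = Y i ω ^ a * (Y j ω ^ b * Y k ω ^ c) := fun ω => by ring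
    simp only [heq]
    rw [h, mul_assoc]
  have K4 : ∀ (i j k l : Fin n), i ≠ j → i ≠ k → i ≠ l → j ≠ k → j ≠ l → k ≠ l →
      ∫ ω, Y i ω * Y j ω * Y k ω * Y l ω ∂μ = 0 := by
    intro i j k l hij hik hil hjk hjl hkl
    have hcard : ({i, j, k, l} : Finset (Fin n)).card ≤ 4 := by
      calc ({i, j, k, l} : Finset (Fin n)).card
          ≤ ({j, k, l} : Finset (Fin n)).card + 1 := Finset.card_insert_le _ _
        _ ≤ (({k, l} : Finset (Fin n)).card + 1) + 1 := by
            exact Nat.add_le_add_right (Finset.card_insert_le _ _) 1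
        _ ≤ 4 := by rw [Finset.card_pair hkl]
    have h1 : i ∉ ({j, k, l} : Finset (Fin n)) := by simp [hij, hik, hil]
    have h2 : j ∉ ({k, l} : Finset (Fin n)) := by simp [hjk, hjl]
    have h := ML μ Y hYm {i, j, k, l} (hind _ hcard) (fun _ => 1)
    simp only [Finset.prod_insert h1, Finset.prod_insert h2, Finset.prod_pair hkl,
      pow_one, hzero] at h
    have heq : ∀ ω : Ω, Y i ω * Y j ω * Y k ω * Y l ω
        = Y i ω * (Y j ω * (Y k ω * Y l ω)) := fun ω => by ring
    simp only [heq]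
    simpa using h
  -- integrability of quadruple products
  have hint4 : ∀ i j k l : Fin n, Integrable (fun ω => Y i ω * Y j ω * Y k ω * Y l ω) μ := by
    intro i j k l
    refine integrable_of_bdd ((((hYm i).mul (hYm j)).mul (hYm k)).mul (hYm l)) fun ω => ?_
    have h1 : |Y i ω| * |Y j ω| ≤ 1 := mul_le_one₀ (hbd i ω) (abs_nonneg _) (hbd j ω)
    have h2 : |Y i ω| * |Y j ω| * |Y k ω| ≤ 1 :=
      mul_le_one₀ h1 (abs_nonneg _) (hbd k ω)
    calc |Y i ω * Y j ω * Y k ω * Y l ω| = |Y i ω| * |Y j ω| * |Y k ω| * |Y l ω| := by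
          rw [abs_mul, abs_mul, abs_mul]
      _ ≤ 1 := mul_le_one₀ h2 (abs_nonneg _) (hbd l ω)
  -- pointwise expansion
  have hpt : ∀ ω, (∑ i, Y i ω)^4 = ∑ i, ∑ j, ∑ k, ∑ l, Y i ω * Y j ω * Y k ω * Y l ω := by
    intro ω
    calc (∑ i, Y i ω)^4
        = ∑ i, Y i ω * (∑ x, Y x ω)^3 := by rw [← Finset.sum_mul]; ring
      _ = ∑ i, ∑ j, Y i ω * Y j ω * (∑ x, Y x ω)^2 := Finset.sum_congr rfl fun i _ => by
          rw [show (∑ x, Y x ω)^3 = ∑ j, Y j ω * (∑ x, Y x ω)^2 from by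
            rw [← Finset.sum_mul]; ring, Finset.mul_sum]
          exact Finset.sum_congr rfl fun j _ => by ring
      _ = ∑ i, ∑ j, ∑ k, Y i ω * Y j ω * Y k ω * (∑ x, Y x ω) :=
          Finset.sum_congr rfl fun i _ => Finset.sum_congr rfl fun j _ => by
            rw [show (∑ x, Y x ω)^2 = ∑ k, Y k ω * (∑ x, Y x ω) from by
              rw [← Finset.sum_mul]; ring, Finset.mul_sum]
            exact Finset.sum_congr rfl fun k _ => by ring
      _ = ∑ i, ∑ j, ∑ k, ∑ l, Y i ω * Y j ω * Y k ω * Y l ω :=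
          Finset.sum_congr rfl fun i _ => Finset.sum_congr rfl fun j _ =>
            Finset.sum_congr rfl fun k _ => by rw [Finset.mul_sum]
  -- push integral inside
  have swap : ∫ ω, (∑ i, Y i ω)^4 ∂μ
      = ∑ i, ∑ j, ∑ k, ∑ l, ∫ ω, Y i ω * Y j ω * Y k ω * Y l ω ∂μ := by
    have h0 : ∫ ω, (∑ i, Y i ω)^4 ∂μ
        = ∫ ω, ∑ i, ∑ j, ∑ k, ∑ l, Y i ω * Y j ω * Y k ω * Y l ω ∂μ := by
      congr 1; funext ω; exact hpt ω
    rw [h0, integral_finset_sum _ (fun i _ => integrable_finset_sum _ (fun j _ =>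
      integrable_finset_sum _ (fun k _ => integrable_finset_sum _ (fun l _ => hint4 i j k l))))]
    refine Finset.sum_congr rfl fun i _ => ?_
    rw [integral_finset_sum _ (fun j _ => integrable_finset_sum _ (fun k _ =>
      integrable_finset_sum _ (fun l _ => hint4 i j k l)))]
    refine Finset.sum_congr rfl fun j _ => ?_
    rw [integral_finset_sum _ (fun k _ => integrable_finset_sum _ (fun l _ => hint4 i j k l))]
    refine Finset.sum_congr rfl fun k _ => ?_
    rw [integral_finset_sum _ (fun l _ => hint4 i j k l)]
  -- integrand rewriting helper
  have irw : ∀ (f g : Ω → ℝ), (∀ ω, f ω = g ω) → ∫ ω, f ω ∂μ = ∫ ω, g ω ∂μ :=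
    fun f g h => by congr 1; exact funext h
  -- per-term bound
  have eb : ∀ i j k l : Fin n, (∫ ω, Y i ω * Y j ω * Y k ω * Y l ω ∂μ) ≤
      (if i = j ∧ k = l then σ i * σ k else 0) + (if i = k ∧ j = l then σ i * σ j else 0)
      + (if i = l ∧ j = k then σ i * σ j else 0)
      + (if i = j ∧ i = k ∧ i = l then σ i else 0) := by
    intro i j k l
    by_cases hij : i = j
    · subst hij
      by_cases hkl : k = l
      · subst hkl
        by_cases hik : i = k
        · subst hik
          rw [irw _ (fun ω => Y i ω ^ 4) (fun ω => by ring)]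
          have h4 := hM4 i; have h0 := hσ0 i
          simp only [and_self, ite_true, if_pos rfl, if_true]
          nlinarith
        · rw [irw _ (fun ω => Y i ω ^ 2 * Y k ω ^ 2) (fun ω => by ring), K2 i k 2 2 hik]
          simp [hik, hσ]
      · by_cases hik : i = k
        · subst hik
          rw [irw _ (fun ω => Y i ω ^ 3 * Y l ω ^ 1) (fun ω => by ring), K2 i l 3 1 hkl,
            hM1 l, mul_zero]
          simp [hkl]
        · by_cases hil : i = l
          · subst hil
            rw [irw _ (fun ω => Y i ω ^ 3 * Y k ω ^ 1) (fun ω => by ring), K2 i k 3 1 hik,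
              hM1 k, mul_zero]
            simp [hik, hkl, Ne.symm hik]
          · rw [irw _ (fun ω => Y i ω ^ 2 * Y k ω ^ 1 * Y l ω ^ 1) (fun ω => by ring),
              K3 i k l 2 1 1 hik hil hkl, hM1 l, mul_zero]
            simp [hik, hil, hkl]
    · by_cases hik : i = k
      · subst hik
        by_cases hjl : j = l
        · subst hjl
          rw [irw _ (fun ω => Y i ω ^ 2 * Y j ω ^ 2) (fun ω => by ring), K2 i j 2 2 hij]
          simp [hij, hσ]
        · by_cases hil : i = l
          · subst hil
            rw [irw _ (fun ω => Y i ω ^ 3 * Y j ω ^ 1) (fun ω => by ring), K2 i j 3 1 hij,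
              hM1 j, mul_zero]
            simp [hij, hjl, Ne.symm hij]
          · rw [irw _ (fun ω => Y i ω ^ 2 * Y j ω ^ 1 * Y l ω ^ 1) (fun ω => by ring),
              K3 i j l 2 1 1 hij hil hjl, hM1 l, mul_zero]
            simp [hij, hil, hjl]
      · by_cases hil : i = l
        · subst hil
          by_cases hjk : j = k
          · subst hjk
            rw [irw _ (fun ω => Y i ω ^ 2 * Y j ω ^ 2) (fun ω => by ring), K2 i j 2 2 hij]
            simp [hij, hik, hσ]
          · rw [irw _ (fun ω => Y i ω ^ 2 * Y j ω ^ 1 * Y k ω ^ 1) (fun ω => by ring),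
              K3 i j k 2 1 1 hij hik hjk, hM1 k, mul_zero]
            simp [hij, hik, hjk]
        · by_cases hjk : j = k
          · subst hjk
            by_cases hjl : j = l
            · subst hjl
              rw [irw _ (fun ω => Y i ω ^ 1 * Y j ω ^ 3) (fun ω => by ring), K2 i j 1 3 hij,
                hM1 i, zero_mul]
              simp [hij, hik, hil]
            · rw [irw _ (fun ω => Y i ω ^ 1 * Y j ω ^ 2 * Y l ω ^ 1) (fun ω => by ring),
                K3 i j l 1 2 1 hij hil hjl, hM1 l, mul_zero]
              simp [hij, hik, hil, hjl]
          · by_cases hjl : j = l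
            · subst hjl
              rw [irw _ (fun ω => Y i ω ^ 1 * Y j ω ^ 2 * Y k ω ^ 1) (fun ω => by ring),
                K3 i j k 1 2 1 hij hik hjk, hM1 k, mul_zero]
              simp [hij, hik, hil, hjk]
            · by_cases hkl : k = l
              · subst hkl
                rw [irw _ (fun ω => Y i ω ^ 1 * Y j ω ^ 1 * Y k ω ^ 2) (fun ω => by ring),
                  K3 i j k 1 1 2 hij hik hjk, hM1 i, zero_mul, zero_mul]
                simp [hij, hik, hil, hjk]
              · rw [K4 i j k l hij hik hil hjk hjl hkl]
                simp [hij, hik, hil, hjk, hjl, hkl]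
  -- sum the bounds
  have e1 : ∑ i : Fin n, ∑ j : Fin n, ∑ k : Fin n, ∑ l : Fin n,
      (if i = j ∧ k = l then σ i * σ k else 0) = (∑ i, σ i)^2 := by
    simp [ite_and, Finset.sum_ite_eq, ← Finset.mul_sum, sq, Finset.sum_mul]
  have e2 : ∑ i : Fin n, ∑ j : Fin n, ∑ k : Fin n, ∑ l : Fin n,
      (if i = k ∧ j = l then σ i * σ j else 0) = (∑ i, σ i)^2 := by
    simp [ite_and, Finset.sum_ite_eq, ← Finset.mul_sum, sq, Finset.sum_mul]
  have e3 : ∑ i : Fin n, ∑ j : Fin n, ∑ k : Fin n, ∑ l : Fin n,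
      (if i = l ∧ j = k then σ i * σ j else 0) = (∑ i, σ i)^2 := by
    simp [ite_and, Finset.sum_ite_eq, ← Finset.mul_sum, sq, Finset.sum_mul]
  have e4 : ∑ i : Fin n, ∑ j : Fin n, ∑ k : Fin n, ∑ l : Fin n,
      (if i = j ∧ i = k ∧ i = l then σ i else 0) = ∑ i, σ i := by
    simp [ite_and, Finset.sum_ite_eq, Finset.sum_ite_eq']
  calc ∫ ω, (∑ i, Y i ω)^4 ∂μ
      = ∑ i, ∑ j, ∑ k, ∑ l, ∫ ω, Y i ω * Y j ω * Y k ω * Y l ω ∂μ := swap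
    _ ≤ ∑ i : Fin n, ∑ j : Fin n, ∑ k : Fin n, ∑ l : Fin n,
        ((if i = j ∧ k = l then σ i * σ k else 0) + (if i = k ∧ j = l then σ i * σ j else 0)
        + (if i = l ∧ j = k then σ i * σ j else 0)
        + (if i = j ∧ i = k ∧ i = l then σ i else 0)) := by
        refine Finset.sum_le_sum fun i _ => Finset.sum_le_sum fun j _ =>
          Finset.sum_le_sum fun k _ => Finset.sum_le_sum fun l _ => eb i j k l
    _ = (∑ i, σ i) + 3 * (∑ i, σ i)^2 := by
        simp only [Finset.sum_add_distrib, e1, e2, e3, e4]; ring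


/-- Let `X_0, ..., X_{n-1}` be 4-wise independent `{0,1}`-valued random variables,
`X = Σ X_i`, and `m = E[X] ≥ 1`. Then `E[(X - m)^4] ≤ 4m²`. -/
theorem stmt6 {Ω : Type*} [MeasurableSpace Ω] (μ : Measure Ω) [IsProbabilityMeasure μ]
    (n : ℕ) (X : Fin n → Ω → ℝ) (hX : ∀ i, Measurable (X i))
    (h01 : ∀ i ω, X i ω = 0 ∨ X i ω = 1)
    (hind : ∀ s : Finset (Fin n), s.card ≤ 4 →
      iIndepFun (fun i : s => X i.1) μ)
    (m : ℝ) (hm : m = ∫ ω, ∑ i, X i ω ∂μ) (hm1 : 1 ≤ m) :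
    (∫ ω, ((∑ i, X i ω) - m) ^ 4 ∂μ) ≤ 4 * m ^ 2 := by
  classical
  set p : Fin n → ℝ := fun i => ∫ ω, X i ω ∂μ with hp
  set Y : Fin n → Ω → ℝ := fun i ω => X i ω - p i with hY
  have hbdX : ∀ i ω, |X i ω| ≤ 1 := by
    intro i ω; rcases h01 i ω with h | h <;> rw [h] <;> norm_num
  have hintX : ∀ i, Integrable (X i) μ := fun i => integrable_of_bdd (hX i) (hbdX i)
  have hp0 : ∀ i, 0 ≤ p i := by
    intro i
    refine integral_nonneg fun ω => ?_
    rcases h01 i ω with h | h <;> rw [h] <;> norm_num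
  have hp1 : ∀ i, p i ≤ 1 := by
    intro i
    have := integral_mono (hintX i) (integrable_const (1:ℝ)) (fun ω => by
      rcases h01 i ω with h | h <;> rw [h] <;> norm_num)
    simpa using this
  have hYm : ∀ i, Measurable (Y i) := fun i => (hX i).sub measurable_const
  have hbd : ∀ i ω, |Y i ω| ≤ 1 := by
    intro i ω
    rw [abs_le]
    rcases h01 i ω with h | h <;> simp only [hY, h] <;>
      constructor <;> nlinarith [hp0 i, hp1 i]
  have hzero : ∀ i, ∫ ω, Y i ω ∂μ = 0 := by
    intro i
    simp only [hY]
    rw [integral_sub (hintX i) (integrable_const _), integral_const]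
    simp [hp]
  have hindY : ∀ s : Finset (Fin n), s.card ≤ 4 →
      iIndepFun (fun i : s => Y i.1) μ := by
    intro s hs
    exact (hind s hs).comp (fun i : s => fun x : ℝ => x - p i.1)
      (fun i => measurable_id.sub_const _)
  have hm' : m = ∑ i, p i := by
    rw [hm, integral_finset_sum _ (fun i _ => hintX i)]
  have hσle : ∀ i, ∫ ω, (Y i ω)^2 ∂μ ≤ p i := by
    intro i
    have hptw : (fun ω => (Y i ω)^2)
        = fun ω => X i ω - 2 * p i * X i ω + p i ^ 2 := by
      funext ω
      rcases h01 i ω with h | h <;> simp only [hY, h] <;> ring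
    have hI1 : Integrable (fun ω => X i ω - 2 * p i * X i ω) μ :=
      (hintX i).sub ((hintX i).const_mul _)
    have hI2 : Integrable (fun _ : Ω => p i ^ 2) μ := integrable_const _
    rw [hptw, integral_add hI1 hI2,
      integral_sub (hintX i) ((hintX i).const_mul _), MeasureTheory.integral_const_mul, integral_const]
    simp only [smul_eq_mul, measure_univ, ENNReal.toReal_one, probReal_univ, one_mul]
    nlinarith [sq_nonneg (p i)]
  have hσ0 : (0:ℝ) ≤ ∑ i, ∫ ω, (Y i ω)^2 ∂μ :=
    Finset.sum_nonneg fun i _ => integral_nonneg fun ω => sq_nonneg _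
  have hσm : ∑ i, ∫ ω, (Y i ω)^2 ∂μ ≤ m := by
    rw [hm']
    exact Finset.sum_le_sum fun i _ => hσle i
  have hmain := main_aux μ Y hYm hbd hzero hindY
  have hLHS : (∫ ω, ((∑ i, X i ω) - m) ^ 4 ∂μ) = ∫ ω, (∑ i, Y i ω)^4 ∂μ := by
    congr 1
    funext ω
    rw [hm']
    simp only [hY, Finset.sum_sub_distrib]
  rw [hLHS]
  refine hmain.trans ?_
  nlinarith [sq_nonneg (∑ i, ∫ ω, (Y i ω)^2 ∂μ)]
end

section
/- Let k ≥ 2 be a fixed integer and let X_0, ..., X_{n-1} be k-wise independent {0,1}-valued random variables with σ_i² = Var[X_i], X = Σ X_i, μ = E[X], σ² = Σ σ_i². Then E[(X - μ)^k] ≤ Σ_{c=1}^{⌊k/2⌋} (c^k / c!) · σ^{2c}. -/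
open MeasureTheory ProbabilityTheory Finset

lemma aux_indep_integral_prod {Ω ι : Type*} [MeasurableSpace Ω] (μ : Measure Ω)
    [IsProbabilityMeasure μ] (g : ι → Ω → ℝ) (hg : ∀ i, Measurable (g i))
    (hind : iIndepFun g μ) (s : Finset ι) :
    (∫ ω, ∏ i ∈ s, g i ω ∂μ) = ∏ i ∈ s, ∫ ω, g i ω ∂μ := by
  classical
  induction s using Finset.induction_on with
  | empty => simp
  | @insert a s ha ih =>
    have h1 : IndepFun (g a) (∏ j ∈ s, g j) μ :=
      (hind.indepFun_finset_prod_of_notMem hg ha).symm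
    have hprodmeas : AEStronglyMeasurable (∏ j ∈ s, g j) μ := by
      have : Measurable fun ω => ∏ j ∈ s, g j ω :=
        Finset.measurable_prod s fun i _ => hg i
      have heq : (∏ j ∈ s, g j) = fun ω => ∏ j ∈ s, g j ω := by
        ext ω; simp [Finset.prod_apply]
      rw [heq]; exact this.aestronglyMeasurable
    calc (∫ ω, ∏ i ∈ insert a s, g i ω ∂μ)
        = ∫ ω, g a ω * (∏ j ∈ s, g j) ω ∂μ := by
          simp [Finset.prod_insert ha, Finset.prod_apply]
      _ = (∫ ω, g a ω ∂μ) * ∫ ω, (∏ j ∈ s, g j) ω ∂μ :=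
          h1.integral_mul_eq_mul_integral (hg a).aestronglyMeasurable hprodmeas
      _ = ∏ i ∈ insert a s, ∫ ω, g i ω ∂μ := by
          rw [Finset.prod_insert ha, ← ih]
          congr 1
          simp [Finset.prod_apply]


lemma aux_esymm_nonneg {ι : Type*} [DecidableEq ι] (v : ι → ℝ) (hv : ∀ i, 0 ≤ v i)
    (s : Finset ι) (c : ℕ) : 0 ≤ ∑ S ∈ Finset.powersetCard c s, ∏ i ∈ S, v i :=
  Finset.sum_nonneg fun S _ => Finset.prod_nonneg fun i _ => hv i

lemma aux_esymm {ι : Type*} [DecidableEq ι] (v : ι → ℝ) (hv : ∀ i, 0 ≤ v i) (s : Finset ι) :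
    ∀ c : ℕ, (Nat.factorial c : ℝ) * ∑ S ∈ Finset.powersetCard c s, ∏ i ∈ S, v i
      ≤ (∑ i ∈ s, v i) ^ c := by
  intro c
  induction c with
  | zero => simp
  | succ c ih =>
    have hsum0 : 0 ≤ ∑ i ∈ s, v i := Finset.sum_nonneg fun i _ => hv i
    have key : ((c : ℝ) + 1) * ∑ S ∈ Finset.powersetCard (c + 1) s, ∏ i ∈ S, v i
        ≤ (∑ i ∈ s, v i) * ∑ T ∈ Finset.powersetCard c s, ∏ i ∈ T, v i := by
      have h1 : ((c : ℝ) + 1) * ∑ S ∈ Finset.powersetCard (c + 1) s, ∏ i ∈ S, v i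
          = ∑ S ∈ Finset.powersetCard (c + 1) s, ∑ i ∈ S, v i * ∏ j ∈ S.erase i, v j := by
        rw [Finset.mul_sum]
        refine Finset.sum_congr rfl fun S hS => ?_
        have hcard : S.card = c + 1 := (Finset.mem_powersetCard.1 hS).2
        have : ∀ i ∈ S, v i * ∏ j ∈ S.erase i, v j = ∏ j ∈ S, v j := fun i hi =>
          Finset.mul_prod_erase S v hi
        rw [Finset.sum_congr rfl this, Finset.sum_const, hcard, nsmul_eq_mul]
        push_cast
        ring
      have h2 : ∑ S ∈ Finset.powersetCard (c + 1) s, ∑ i ∈ S, v i * ∏ j ∈ S.erase i, v j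
          = ∑ i ∈ s, ∑ T ∈ Finset.powersetCard c (s.erase i), v i * ∏ j ∈ T, v j := by
        rw [Finset.sum_sigma', Finset.sum_sigma']
        refine Finset.sum_nbij' (fun x => ⟨x.2, x.1.erase x.2⟩) (fun x => ⟨insert x.1 x.2, x.1⟩)
          ?_ ?_ ?_ ?_ ?_
        · rintro ⟨S, i⟩ hSi
          simp only [Finset.mem_sigma, Finset.mem_powersetCard] at hSi ⊢
          obtain ⟨⟨hSs, hScard⟩, hiS⟩ := hSi
          refine ⟨hSs hiS, ?_, ?_⟩
          · intro j hj
            simp only [Finset.mem_erase] at hj ⊢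
            exact ⟨hj.1, hSs hj.2⟩
          · rw [Finset.card_erase_of_mem hiS, hScard]; rfl
        · rintro ⟨i, T⟩ hiT
          simp only [Finset.mem_sigma, Finset.mem_powersetCard] at hiT ⊢
          obtain ⟨his, hTs, hTcard⟩ := hiT
          have hiT' : i ∉ T := fun h => (Finset.mem_erase.1 (hTs h)).1 rfl
          refine ⟨⟨?_, ?_⟩, Finset.mem_insert_self i T⟩
          · intro j hj
            rcases Finset.mem_insert.1 hj with rfl | hj
            · exact his
            · exact Finset.mem_of_mem_erase (hTs hj)
          · rw [Finset.card_insert_of_notMem hiT', hTcard]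
        · rintro ⟨S, i⟩ hSi
          simp only [Finset.mem_sigma] at hSi
          simp [Finset.insert_erase hSi.2]
        · rintro ⟨i, T⟩ hiT
          simp only [Finset.mem_sigma, Finset.mem_powersetCard] at hiT
          have hiT' : i ∉ T := fun h => (Finset.mem_erase.1 (hiT.2.1 h)).1 rfl
          simp [Finset.erase_insert hiT']
        · rintro ⟨S, i⟩ hSi
          rfl
      have h3 : ∀ i ∈ s, ∑ T ∈ Finset.powersetCard c (s.erase i), v i * ∏ j ∈ T, v j
          ≤ v i * ∑ T ∈ Finset.powersetCard c s, ∏ j ∈ T, v j := by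
        intro i hi
        rw [← Finset.mul_sum]
        refine mul_le_mul_of_nonneg_left ?_ (hv i)
        refine Finset.sum_le_sum_of_subset_of_nonneg
          (Finset.powersetCard_mono (Finset.erase_subset i s)) ?_
        intro T _ _
        exact Finset.prod_nonneg fun j _ => hv j
      calc ((c : ℝ) + 1) * ∑ S ∈ Finset.powersetCard (c + 1) s, ∏ i ∈ S, v i
          = ∑ i ∈ s, ∑ T ∈ Finset.powersetCard c (s.erase i), v i * ∏ j ∈ T, v j := by
            rw [h1, h2]
        _ ≤ ∑ i ∈ s, v i * ∑ T ∈ Finset.powersetCard c s, ∏ j ∈ T, v j :=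
            Finset.sum_le_sum h3
        _ = (∑ i ∈ s, v i) * ∑ T ∈ Finset.powersetCard c s, ∏ i ∈ T, v i := by
            rw [← Finset.sum_mul]
    have hfact0 : (0:ℝ) ≤ (Nat.factorial c : ℝ) := Nat.cast_nonneg _
    calc (Nat.factorial (c+1) : ℝ) * ∑ S ∈ Finset.powersetCard (c+1) s, ∏ i ∈ S, v i
        = (Nat.factorial c : ℝ) * (((c:ℝ) + 1) * ∑ S ∈ Finset.powersetCard (c+1) s, ∏ i ∈ S, v i) := by
          rw [Nat.factorial_succ]
          push_cast
          ring
      _ ≤ (Nat.factorial c : ℝ) * ((∑ i ∈ s, v i) * ∑ T ∈ Finset.powersetCard c s, ∏ i ∈ T, v i) :=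
          mul_le_mul_of_nonneg_left key hfact0
      _ = (∑ i ∈ s, v i) * ((Nat.factorial c : ℝ) * ∑ T ∈ Finset.powersetCard c s, ∏ i ∈ T, v i) := by
          ring
      _ ≤ (∑ i ∈ s, v i) * (∑ i ∈ s, v i) ^ c := mul_le_mul_of_nonneg_left ih hsum0
      _ = (∑ i ∈ s, v i) ^ (c+1) := by ring


/-- Let `k ≥ 2` and let `X_0, ..., X_{n-1}` be `k`-wise independent `{0,1}`-valued random
variables with `σ_i² = Var[X_i]`, `X = Σ X_i`, `m = E[X]`, `σ² = Σ σ_i²`. Then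
`E[(X - m)^k] ≤ Σ_{c=1}^{⌊k/2⌋} (c^k / c!) · σ^{2c}`. -/
theorem stmt8 {Ω : Type*} [MeasurableSpace Ω] (μ : Measure Ω) [IsProbabilityMeasure μ]
    (k : ℕ) (hk : 2 ≤ k)
    (n : ℕ) (X : Fin n → Ω → ℝ) (hX : ∀ i, Measurable (X i))
    (h01 : ∀ i ω, X i ω = 0 ∨ X i ω = 1)
    (hind : ∀ s : Finset (Fin n), s.card ≤ k →
      iIndepFun (fun i : s => X i.1) μ)
    (σ2 : ℝ) (hσ2 : σ2 = ∑ i, variance (X i) μ)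
    (m : ℝ) (hm : m = ∫ ω, ∑ i, X i ω ∂μ) :
    (∫ ω, ((∑ i, X i ω) - m) ^ k ∂μ) ≤
      ∑ c ∈ Finset.Icc 1 (k / 2), ((c : ℝ) ^ k / (Nat.factorial c)) * σ2 ^ c := by
  classical
  set p : Fin n → ℝ := fun i => ∫ ω, X i ω ∂μ with hp
  set Y : Fin n → Ω → ℝ := fun i ω => X i ω - p i with hYdef
  set v : Fin n → ℝ := fun i => variance (X i) μ with hv
  -- basic facts
  have hXb : ∀ i ω, |X i ω| ≤ 1 := by
    intro i ω; rcases h01 i ω with h | h <;> rw [h] <;> norm_num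
  have hXint : ∀ i, Integrable (X i) μ := by
    intro i
    refine (integrable_const (1:ℝ)).mono' (hX i).aestronglyMeasurable ?_
    exact Filter.Eventually.of_forall fun ω => by rw [Real.norm_eq_abs]; exact hXb i ω
  have hp0 : ∀ i, 0 ≤ p i := by
    intro i
    refine integral_nonneg fun ω => ?_
    rcases h01 i ω with h | h <;> rw [h] <;> norm_num
  have hp1 : ∀ i, p i ≤ 1 := by
    intro i
    have := integral_mono (hXint i) (integrable_const (1:ℝ))
      (fun ω => by rcases h01 i ω with h | h <;> rw [h] <;> norm_num)
    simpa using this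
  have hYb : ∀ i ω, |Y i ω| ≤ 1 := by
    intro i ω
    rw [abs_le]
    rcases h01 i ω with h | h <;> simp only [hYdef, h] <;>
      constructor <;> linarith [hp0 i, hp1 i]
  have hYm : ∀ i, Measurable (Y i) := fun i => (hX i).sub measurable_const
  have hYpow_int : ∀ (i : Fin n) (t : ℕ), Integrable (fun ω => Y i ω ^ t) μ := by
    intro i t
    refine (integrable_const (1:ℝ)).mono' ((hYm i).pow_const t).aestronglyMeasurable ?_
    refine Filter.Eventually.of_forall fun ω => ?_
    rw [Real.norm_eq_abs, abs_pow]
    exact pow_le_one₀ (abs_nonneg _) (hYb i ω)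
  have hY1 : ∀ i, ∫ ω, Y i ω ∂μ = 0 := by
    intro i
    simp only [hYdef]
    rw [integral_sub (hXint i) (integrable_const _), integral_const]
    simp [hp]
  have hveq : ∀ i, v i = ∫ ω, Y i ω ^ 2 ∂μ := by
    intro i
    have hmem : MemLp (X i) 2 μ :=
      (memLp_top_of_bound (hX i).aestronglyMeasurable 1
        (Filter.Eventually.of_forall fun ω => by
          rw [Real.norm_eq_abs]; exact hXb i ω)).mono_exponent le_top
    have h := variance_eq_integral ((hX i).aemeasurable (μ := μ))
    show variance (X i) μ = _
    rw [h]
  have hv0 : ∀ i, 0 ≤ v i := fun i => variance_nonneg _ _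
  have hvY : ∀ (i : Fin n) (t : ℕ), 2 ≤ t → |∫ ω, Y i ω ^ t ∂μ| ≤ v i := by
    intro i t ht
    have h1 : |∫ ω, Y i ω ^ t ∂μ| ≤ ∫ ω, |Y i ω ^ t| ∂μ := by
      simpa [Real.norm_eq_abs] using
        norm_integral_le_integral_norm (μ := μ) (f := fun ω => Y i ω ^ t)
    have h2 : ∫ ω, |Y i ω ^ t| ∂μ ≤ ∫ ω, Y i ω ^ 2 ∂μ := by
      refine integral_mono ((hYpow_int i t).abs) (hYpow_int i 2) fun ω => ?_
      rw [abs_pow]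
      calc |Y i ω| ^ t ≤ |Y i ω| ^ 2 :=
            pow_le_pow_of_le_one (abs_nonneg _) (hYb i ω) ht
        _ = Y i ω ^ 2 := sq_abs _
    rw [hveq i]
    exact h1.trans h2
  -- rewrite LHS as sum over functions
  have hm' : m = ∑ i, p i := by
    rw [hm, integral_finset_sum univ fun i _ => hXint i]
  have hpt : ∀ ω, ((∑ i, X i ω) - m) ^ k = ∑ f : Fin k → Fin n, ∏ j, Y (f j) ω := by
    intro ω
    have h : (∑ i, X i ω) - m = ∑ i, Y i ω := by
      rw [hm', ← Finset.sum_sub_distrib]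
    rw [h, Fintype.sum_pow]
  have hprod_int : ∀ f : Fin k → Fin n, Integrable (fun ω => ∏ j, Y (f j) ω) μ := by
    intro f
    refine (integrable_const (1:ℝ)).mono'
      (Finset.measurable_prod univ fun j _ => hYm (f j)).aestronglyMeasurable ?_
    refine Filter.Eventually.of_forall fun ω => ?_
    rw [Real.norm_eq_abs, Finset.abs_prod]
    exact Finset.prod_le_one (fun j _ => abs_nonneg _) (fun j _ => hYb _ ω)
  have hLHS : (∫ ω, ((∑ i, X i ω) - m) ^ k ∂μ)
      = ∑ f : Fin k → Fin n, ∫ ω, ∏ j, Y (f j) ω ∂μ := by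
    simp_rw [hpt]
    exact integral_finset_sum univ fun f _ => hprod_int f
  -- multiplicities
  set mult : (Fin k → Fin n) → Fin n → ℕ :=
    fun f i => (univ.filter fun j => f j = i).card with hmult
  have hmult_sum : ∀ f : Fin k → Fin n, ∑ i ∈ univ.image f, mult f i = k := by
    intro f
    have h := Finset.card_eq_sum_card_image f (univ : Finset (Fin k))
    simpa [Finset.card_univ] using h.symm
  have hmult_pos : ∀ (f : Fin k → Fin n), ∀ i ∈ univ.image f, 1 ≤ mult f i := by
    intro f i hi
    obtain ⟨j, _, rfl⟩ := Finset.mem_image.1 hi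
    exact Finset.card_pos.2 ⟨j, Finset.mem_filter.2 ⟨Finset.mem_univ _, rfl⟩⟩
  -- independence: factorization of the integral
  have hEprod : ∀ f : Fin k → Fin n, (∫ ω, ∏ j, Y (f j) ω ∂μ)
      = ∏ i ∈ univ.image f, ∫ ω, Y i ω ^ mult f i ∂μ := by
    intro f
    set S := univ.image f with hS
    have hcard : S.card ≤ k := le_trans Finset.card_image_le (by simp)
    have hbase := hind S hcard
    have hcomp := hbase.comp (fun i : S => fun x : ℝ => (x - p i.1) ^ mult f i.1)
      (fun i => (measurable_id.sub measurable_const).pow_const _)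
    have hcomp' : iIndepFun
        (fun (i : S) (ω : Ω) => Y i.1 ω ^ mult f i.1) μ := hcomp
    have hint := aux_indep_integral_prod μ
      (fun (i : S) (ω : Ω) => Y i.1 ω ^ mult f i.1)
      (fun i => (hYm i.1).pow_const _) hcomp' Finset.univ
    have hpw : ∀ ω, ∏ j, Y (f j) ω = ∏ i ∈ S, Y i ω ^ mult f i := by
      intro ω
      exact Finset.prod_comp (fun i => Y i ω) f
    calc (∫ ω, ∏ j, Y (f j) ω ∂μ)
        = ∫ ω, ∏ i ∈ S, Y i ω ^ mult f i ∂μ := by simp_rw [hpw]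
      _ = ∫ ω, ∏ i : S, Y i.1 ω ^ mult f i.1 ∂μ := by
          congr 1; ext ω
          rw [Finset.univ_eq_attach, Finset.prod_attach S (fun i => Y i ω ^ mult f i)]
      _ = ∏ i : S, ∫ ω, Y i.1 ω ^ mult f i.1 ∂μ := hint
      _ = ∏ i ∈ S, ∫ ω, Y i ω ^ mult f i ∂μ := by
          rw [Finset.univ_eq_attach, Finset.prod_attach S (fun i => ∫ ω, Y i ω ^ mult f i ∂μ)]
  -- termwise bound
  set B : (Fin k → Fin n) → ℝ :=
    fun f => if ∀ i ∈ univ.image f, 2 ≤ mult f i then ∏ i ∈ univ.image f, v i else 0 with hB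
  have hBbound : ∀ f : Fin k → Fin n, (∫ ω, ∏ j, Y (f j) ω ∂μ) ≤ B f := by
    intro f
    rw [hEprod f]
    simp only [hB]
    by_cases hg : ∀ i ∈ univ.image f, 2 ≤ mult f i
    · rw [if_pos hg]
      calc ∏ i ∈ univ.image f, ∫ ω, Y i ω ^ mult f i ∂μ
          ≤ |∏ i ∈ univ.image f, ∫ ω, Y i ω ^ mult f i ∂μ| := le_abs_self _
        _ = ∏ i ∈ univ.image f, |∫ ω, Y i ω ^ mult f i ∂μ| := Finset.abs_prod _ _
        _ ≤ ∏ i ∈ univ.image f, v i :=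
            Finset.prod_le_prod (fun i _ => abs_nonneg _) (fun i hi => hvY i _ (hg i hi))
    · rw [if_neg hg]
      push_neg at hg
      obtain ⟨i0, hi0, hlt⟩ := hg
      have h1 : mult f i0 = 1 := le_antisymm (by omega) (hmult_pos f i0 hi0)
      have h0 : ∫ ω, Y i0 ω ^ mult f i0 ∂μ = 0 := by
        rw [h1]; simpa using hY1 i0
      exact le_of_eq (Finset.prod_eq_zero hi0 h0)
  have hσ2nn : 0 ≤ σ2 := by
    rw [hσ2]; exact Finset.sum_nonneg fun i _ => variance_nonneg _ _
  -- combinatorial bound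
  have hsumB : ∑ f : Fin k → Fin n, B f ≤
      ∑ c ∈ Finset.Icc 1 (k / 2), ((c : ℝ) ^ k / (Nat.factorial c)) * σ2 ^ c := by
    have h1 : ∑ f : Fin k → Fin n, B f
        = ∑ S ∈ (univ : Finset (Fin n)).powerset,
            ∑ f ∈ univ.filter (fun f : Fin k → Fin n => univ.image f = S), B f :=
      (Finset.sum_fiberwise_of_maps_to
        (fun f _ => Finset.mem_powerset.2 (Finset.subset_univ _)) B).symm
    have h2 : ∀ S ∈ (univ : Finset (Fin n)).powerset,
        (∑ f ∈ univ.filter (fun f : Fin k → Fin n => univ.image f = S), B f)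
        ≤ (if 1 ≤ S.card ∧ S.card ≤ k / 2 then (S.card : ℝ) ^ k * ∏ i ∈ S, v i else 0) := by
      intro S _
      by_cases hc : 1 ≤ S.card ∧ S.card ≤ k / 2
      · rw [if_pos hc]
        have hb : ∀ f ∈ univ.filter (fun f : Fin k → Fin n => univ.image f = S),
            B f ≤ ∏ i ∈ S, v i := by
          intro f hf
          have hfS : univ.image f = S := (Finset.mem_filter.1 hf).2
          simp only [hB]
          split_ifs with h
          · exact le_of_eq (by rw [hfS])
          · exact Finset.prod_nonneg fun i _ => hv0 i
        have hcard : (univ.filter (fun f : Fin k → Fin n => univ.image f = S)).card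
            ≤ S.card ^ k := by
          have hsub : univ.filter (fun f : Fin k → Fin n => univ.image f = S)
              ⊆ Fintype.piFinset (fun _ : Fin k => S) := by
            intro f hf
            have hfS : univ.image f = S := (Finset.mem_filter.1 hf).2
            rw [Fintype.mem_piFinset]
            intro j
            rw [← hfS]
            exact Finset.mem_image_of_mem f (Finset.mem_univ j)
          calc _ ≤ (Fintype.piFinset (fun _ : Fin k => S)).card := Finset.card_le_card hsub
            _ = S.card ^ k := by rw [Fintype.card_piFinset]; simp
        have hpnn : 0 ≤ ∏ i ∈ S, v i := Finset.prod_nonneg fun i _ => hv0 i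
        calc (∑ f ∈ univ.filter (fun f : Fin k → Fin n => univ.image f = S), B f)
            ≤ (univ.filter (fun f : Fin k → Fin n => univ.image f = S)).card
                • (∏ i ∈ S, v i) := Finset.sum_le_card_nsmul _ _ _ hb
          _ = ((univ.filter (fun f : Fin k → Fin n => univ.image f = S)).card : ℝ)
                * ∏ i ∈ S, v i := nsmul_eq_mul _ _
          _ ≤ (S.card : ℝ) ^ k * ∏ i ∈ S, v i := by
              refine mul_le_mul_of_nonneg_right ?_ hpnn
              exact_mod_cast hcard
      · rw [if_neg hc]
        refine le_of_eq (Finset.sum_eq_zero fun f hf => ?_)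
        have hfS : univ.image f = S := (Finset.mem_filter.1 hf).2
        simp only [hB]
        rw [if_neg ?_]
        intro hgood
        have h2S : 2 * S.card ≤ k := by
          have hsum := hmult_sum f
          rw [hfS] at hsum
          have hle : ∑ i ∈ univ.image f, 2 ≤ ∑ i ∈ univ.image f, mult f i :=
            Finset.sum_le_sum hgood
          rw [Finset.sum_const, hfS, smul_eq_mul] at hle
          omega
        have hS1 : 1 ≤ S.card := by
          rw [← hfS]
          exact Finset.card_pos.2
            ⟨f ⟨0, by omega⟩, Finset.mem_image_of_mem f (Finset.mem_univ _)⟩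
        exact hc ⟨hS1, (Nat.le_div_iff_mul_le (by norm_num)).2 (by omega)⟩
    have h3 : ∑ S ∈ (univ : Finset (Fin n)).powerset,
        (if 1 ≤ S.card ∧ S.card ≤ k / 2 then (S.card : ℝ) ^ k * ∏ i ∈ S, v i else 0)
        ≤ ∑ c ∈ Finset.Icc 1 (k / 2), ((c : ℝ) ^ k / (Nat.factorial c)) * σ2 ^ c := by
      rw [Finset.sum_powerset]
      have hterm : ∀ c ∈ Finset.range ((univ : Finset (Fin n)).card + 1),
          (∑ S ∈ Finset.powersetCard c (univ : Finset (Fin n)),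
            if 1 ≤ S.card ∧ S.card ≤ k / 2 then (S.card : ℝ) ^ k * ∏ i ∈ S, v i else 0)
          = (if 1 ≤ c ∧ c ≤ k / 2 then
              (c : ℝ) ^ k * ∑ S ∈ Finset.powersetCard c (univ : Finset (Fin n)), ∏ i ∈ S, v i
            else 0) := by
        intro c _
        have hc : ∀ S ∈ Finset.powersetCard c (univ : Finset (Fin n)),
            (if 1 ≤ S.card ∧ S.card ≤ k / 2 then (S.card : ℝ) ^ k * ∏ i ∈ S, v i else 0)
            = (if 1 ≤ c ∧ c ≤ k / 2 then (c : ℝ) ^ k * ∏ i ∈ S, v i else 0) := by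
          intro S hS
          rw [(Finset.mem_powersetCard.1 hS).2]
        rw [Finset.sum_congr rfl hc]
        split_ifs with h
        · rw [Finset.mul_sum]
        · exact Finset.sum_const_zero
      rw [Finset.sum_congr rfl hterm, ← Finset.sum_filter]
      have hbound : ∀ c ∈ (Finset.range ((univ : Finset (Fin n)).card + 1)).filter
          (fun c => 1 ≤ c ∧ c ≤ k / 2),
          (c : ℝ) ^ k * ∑ S ∈ Finset.powersetCard c (univ : Finset (Fin n)), ∏ i ∈ S, v i
          ≤ ((c : ℝ) ^ k / (Nat.factorial c)) * σ2 ^ c := by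
        intro c _
        have hfac : (0:ℝ) < (Nat.factorial c : ℝ) := by
          exact_mod_cast Nat.factorial_pos c
        have he : ∑ S ∈ Finset.powersetCard c (univ : Finset (Fin n)), ∏ i ∈ S, v i
            ≤ σ2 ^ c / (Nat.factorial c : ℝ) := by
          rw [le_div_iff₀' hfac]
          have := aux_esymm v hv0 (univ : Finset (Fin n)) c
          rwa [hσ2]
        calc (c : ℝ) ^ k * ∑ S ∈ Finset.powersetCard c (univ : Finset (Fin n)), ∏ i ∈ S, v i
            ≤ (c : ℝ) ^ k * (σ2 ^ c / (Nat.factorial c : ℝ)) :=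
              mul_le_mul_of_nonneg_left he (by positivity)
          _ = ((c : ℝ) ^ k / (Nat.factorial c)) * σ2 ^ c := by ring
      calc _ ≤ ∑ c ∈ (Finset.range ((univ : Finset (Fin n)).card + 1)).filter
            (fun c => 1 ≤ c ∧ c ≤ k / 2),
            ((c : ℝ) ^ k / (Nat.factorial c)) * σ2 ^ c := Finset.sum_le_sum hbound
        _ ≤ ∑ c ∈ Finset.Icc 1 (k / 2), ((c : ℝ) ^ k / (Nat.factorial c)) * σ2 ^ c := by
            refine Finset.sum_le_sum_of_subset_of_nonneg ?_ ?_
            · intro c hc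
              have := (Finset.mem_filter.1 hc).2
              exact Finset.mem_Icc.2 this
            · intro c _ _
              have h0 : (0:ℝ) ≤ (c : ℝ) ^ k / (Nat.factorial c) := by positivity
              exact mul_nonneg h0 (pow_nonneg hσ2nn c)
    rw [h1]
    exact (Finset.sum_le_sum h2).trans h3
  calc (∫ ω, ((∑ i, X i ω) - m) ^ k ∂μ)
      = ∑ f : Fin k → Fin n, ∫ ω, ∏ j, Y (f j) ω ∂μ := hLHS
    _ ≤ ∑ f : Fin k → Fin n, B f := Finset.sum_le_sum fun f _ => hBbound f
    _ ≤ ∑ c ∈ Finset.Icc 1 (k / 2), ((c : ℝ) ^ k / (Nat.factorial c)) * σ2 ^ c := hsumB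
end

section
/- Suppose each of n keys is hashed 4-wise independently and uniformly into a table of size t with n ≤ (2/3)t, where t is a power of two. For any dyadic interval I of length 2^ℓ contained in [t], the probability that at least (3/4)·2^ℓ keys hash into I is at most 40000/2^{2ℓ}. -/
open MeasureTheory ProbabilityTheory

set_option maxHeartbeats 1000000 in
lemma aux_singleton14 {α : Type*} {i j k l : α} (h1 : ¬(i=j∧k=l)) (h2 : ¬(i=k∧j=l))
    (h3 : ¬(i=l∧j=k)) :
    (i≠j∧i≠k∧i≠l) ∨ (j≠i∧j≠k∧j≠l) ∨ (k≠i∧k≠j∧k≠l) ∨ (l≠i∧l≠j∧l≠k) := by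
  by_cases hij : i = j <;> by_cases hik : i = k <;> by_cases hil : i = l <;>
    by_cases hjk : j = k <;> by_cases hjl : j = l <;> by_cases hkl : k = l <;>
    subst_vars <;> tauto

lemma aux_intbd14 {Ω : Type*} [MeasurableSpace Ω] (μ : Measure Ω) [IsFiniteMeasure μ]
    (f : Ω → ℝ) (C : ℝ) (hf : Measurable f) (h : ∀ ω, ‖f ω‖ ≤ C) : Integrable f μ :=
  (integrable_const C).mono' hf.aestronglyMeasurable (Filter.Eventually.of_forall h)

lemma aux_prod4_zero14 {Ω : Type*} [MeasurableSpace Ω] (μ : Measure Ω) [IsProbabilityMeasure μ]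
    {n : ℕ} (G : Fin n → Ω → ℝ) (hGmeas : ∀ i, Measurable (G i))
    (hGind : ∀ s : Finset (Fin n), s.card ≤ 4 →
      iIndepFun (fun i : s => G i.1) μ)
    (hGbd : ∀ i ω, ‖G i ω‖ ≤ 1) (hG0 : ∀ i, ∫ ω, G i ω ∂μ = 0)
    (m c d e : Fin n) (hmc : m ≠ c) (hmd : m ≠ d) (hme : m ≠ e) :
    ∫ ω, G m ω * G c ω * G d ω * G e ω ∂μ = 0 := by
  classical
  set s : Finset (Fin n) := insert m (insert c (insert d {e})) with hs
  have hcard : s.card ≤ 4 :=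
    (Finset.card_insert_le _ _).trans (Nat.succ_le_succ
      ((Finset.card_insert_le _ _).trans (Nat.succ_le_succ
        ((Finset.card_insert_le _ _).trans (Nat.succ_le_succ (Finset.card_singleton _).le)))))
  have hGi := hGind s hcard
  have hm : m ∈ s := by simp [hs]
  have hc : c ∈ s := by simp [hs]
  have hd : d ∈ s := by simp [hs]
  have he : e ∈ s := by simp [hs]
  set S : Finset s := {⟨m, hm⟩} with hS
  set T : Finset s := {⟨c, hc⟩, ⟨d, hd⟩, ⟨e, he⟩} with hT
  have hST : Disjoint S T := by
    simp only [hS, hT, Finset.disjoint_singleton_left, Finset.mem_insert, Finset.mem_singleton,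
      Subtype.ext_iff]
    push_neg
    exact ⟨hmc, hmd, hme⟩
  have hIF := hGi.indepFun_finset S T hST (fun i => hGmeas i.1)
  have hg1 : Measurable (fun v : (S → ℝ) => v ⟨⟨m, hm⟩, by simp [hS]⟩) := measurable_pi_apply _
  have hg2 : Measurable (fun v : (T → ℝ) =>
      v ⟨⟨c, hc⟩, by simp [hT]⟩ * (v ⟨⟨d, hd⟩, by simp [hT]⟩ * v ⟨⟨e, he⟩, by simp [hT]⟩)) :=
    (measurable_pi_apply _).mul ((measurable_pi_apply _).mul (measurable_pi_apply _))
  have hfin : IndepFun (G m) (fun ω => G c ω * (G d ω * G e ω)) μ := hIF.comp hg1 hg2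
  have hint1 : Integrable (G m) μ := aux_intbd14 μ _ 1 (hGmeas m) (hGbd m)
  have hint3 : Integrable (fun ω => G c ω * (G d ω * G e ω)) μ := by
    refine aux_intbd14 μ _ 1 ((hGmeas c).mul ((hGmeas d).mul (hGmeas e))) fun ω => ?_
    rw [norm_mul, norm_mul]
    exact mul_le_one₀ (hGbd c ω) (by positivity)
      (mul_le_one₀ (hGbd d ω) (norm_nonneg _) (hGbd e ω))
  have hmul := hfin.integral_mul_eq_mul_integral hint1.aestronglyMeasurable hint3.aestronglyMeasurable
  have heq : ∫ ω, G m ω * G c ω * G d ω * G e ω ∂μ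
      = ∫ ω, (G m * fun ω => G c ω * (G d ω * G e ω)) ω ∂μ := by
    refine integral_congr_ae (Filter.Eventually.of_forall fun ω => ?_)
    simp [Pi.mul_apply]; ring
  rw [heq, hmul, hG0 m, zero_mul]

lemma aux_sq_sq14 {Ω : Type*} [MeasurableSpace Ω] (μ : Measure Ω) [IsProbabilityMeasure μ]
    {n : ℕ} (G : Fin n → Ω → ℝ) (hGmeas : ∀ i, Measurable (G i))
    (hGind : ∀ s : Finset (Fin n), s.card ≤ 4 →
      iIndepFun (fun i : s => G i.1) μ)
    (hGbd : ∀ i ω, ‖G i ω‖ ≤ 1)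
    (i j : Fin n) (hij : i ≠ j) :
    ∫ ω, G i ω ^ 2 * G j ω ^ 2 ∂μ = (∫ ω, G i ω ^ 2 ∂μ) * ∫ ω, G j ω ^ 2 ∂μ := by
  classical
  set s : Finset (Fin n) := insert i {j} with hs
  have hcard : s.card ≤ 4 :=
    (Finset.card_insert_le _ _).trans (by simp)
  have hGi := hGind s hcard
  have hi : i ∈ s := by simp [hs]
  have hj : j ∈ s := by simp [hs]
  have hne : (⟨i, hi⟩ : s) ≠ ⟨j, hj⟩ := by simp [Subtype.ext_iff, hij]
  have hIF : IndepFun (G i) (G j) μ := hGi.indepFun hne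
  have hIF2 : IndepFun (fun ω => G i ω ^ 2) (fun ω => G j ω ^ 2) μ :=
    hIF.comp (measurable_id.pow_const 2) (measurable_id.pow_const 2)
  have hsq : ∀ (k : Fin n) ω, ‖G k ω ^ 2‖ ≤ 1 := by
    intro k ω
    rw [norm_pow]
    exact pow_le_one₀ (norm_nonneg _) (hGbd k ω)
  have h1 : Integrable (fun ω => G i ω ^ 2) μ :=
    aux_intbd14 μ _ 1 ((hGmeas i).pow_const 2) (hsq i)
  have h2 : Integrable (fun ω => G j ω ^ 2) μ :=
    aux_intbd14 μ _ 1 ((hGmeas j).pow_const 2) (hsq j)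
  have := hIF2.integral_mul_eq_mul_integral h1.aestronglyMeasurable h2.aestronglyMeasurable
  simpa using this

set_option maxHeartbeats 4000000 in
/-- Suppose each of `n` keys is hashed 4-wise independently and uniformly into a table of
size `t` with `n ≤ (2/3)t`, where `t` is a power of two. For any dyadic interval
`I = [a·2^ℓ, (a+1)·2^ℓ)` contained in `[t]`, the probability that at least `(3/4)·2^ℓ`
keys hash into `I` is at most `40000/2^{2ℓ}`. -/
theorem stmt14 {Ω : Type*} [MeasurableSpace Ω] (μ : Measure Ω) [IsProbabilityMeasure μ]
    (n t : ℕ) (L : ℕ) (htpow : t = 2 ^ L) (hload : 3 * n ≤ 2 * t)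
    (H : Fin n → Ω → ℕ) (hmeas : ∀ i, Measurable (H i))
    (hrange : ∀ i ω, H i ω < t)
    (hunif : ∀ (i : Fin n) (y : ℕ), y < t → μ {ω | H i ω = y} = (t : ENNReal)⁻¹)
    (hind : ∀ s : Finset (Fin n), s.card ≤ 4 →
      iIndepFun (fun i : s => H i.1) μ)
    (ℓ a : ℕ) (hI : (a + 1) * 2 ^ ℓ ≤ t) :
    (μ {ω | (3 : ℝ) / 4 * 2 ^ ℓ ≤
        ((Finset.univ.filter fun i : Fin n =>
          a * 2 ^ ℓ ≤ H i ω ∧ H i ω < (a + 1) * 2 ^ ℓ).card : ℝ)}).toReal ≤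
      40000 / 2 ^ (2 * ℓ) := by
  classical
  have htoReal_le_one : ∀ s : Set Ω, (μ s).toReal ≤ 1 := by
    intro s
    have h1 : μ s ≤ 1 := prob_le_one
    calc (μ s).toReal ≤ (1 : ENNReal).toReal := ENNReal.toReal_mono (by simp) h1
    _ = 1 := by simp
  rcases Nat.eq_zero_or_pos ℓ with hl0 | hlpos
  · subst hl0
    calc (μ _).toReal ≤ 1 := htoReal_le_one _
    _ ≤ 40000 / 2 ^ (2 * 0) := by norm_num
  -- main case : ℓ ≥ 1
  have ht0 : 0 < t := by subst htpow; positivity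
  have h2t : 2 ^ ℓ ≤ t := le_trans (Nat.le_mul_of_pos_left _ (Nat.succ_pos a)) hI
  set p : ℝ := 2 ^ ℓ / t with hpdef
  have hp0 : 0 ≤ p := by positivity
  have hp1 : p ≤ 1 := by
    rw [hpdef, div_le_one (by exact_mod_cast ht0)]
    exact_mod_cast h2t
  have hnp : (n : ℝ) * p ≤ 2 / 3 * 2 ^ ℓ := by
    rw [hpdef]
    rw [mul_div_assoc', div_le_iff₀ (by exact_mod_cast ht0)]
    have h3 : (3 : ℝ) * n ≤ 2 * t := by exact_mod_cast hload
    have h2l : (0:ℝ) < 2 ^ ℓ := by positivity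
    nlinarith
  have hnp0 : 0 ≤ (n : ℝ) * p := by positivity
  set φf : ℕ → ℝ := fun y => (if a * 2 ^ ℓ ≤ y ∧ y < (a + 1) * 2 ^ ℓ then (1:ℝ) else 0) - p
    with hφdef
  set Z : Fin n → Ω → ℝ := fun i ω => φf (H i ω) with hZdef
  set A : Fin n → Set Ω := fun i => {ω | a * 2 ^ ℓ ≤ H i ω ∧ H i ω < (a + 1) * 2 ^ ℓ} with hAdef
  have hAmeas : ∀ i, MeasurableSet (A i) := by
    intro i
    exact (hmeas i) (MeasurableSet.of_discrete
      (s := {y : ℕ | a * 2 ^ ℓ ≤ y ∧ y < (a + 1) * 2 ^ ℓ}))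
  have hZmeas : ∀ i, Measurable (Z i) := fun i => (Measurable.of_discrete (f := φf)).comp (hmeas i)
  have hZbd : ∀ i ω, ‖Z i ω‖ ≤ 1 := by
    intro i ω
    rw [hZdef]
    simp only [Real.norm_eq_abs, abs_le]
    by_cases h : a * 2 ^ ℓ ≤ H i ω ∧ H i ω < (a + 1) * 2 ^ ℓ <;>
      simp [hφdef, h] <;> constructor <;> linarith
  have hμA : ∀ i, μ (A i) = 2 ^ ℓ / (t : ENNReal) := by
    intro i
    have hset : A i = ⋃ y ∈ Finset.Ico (a * 2 ^ ℓ) ((a + 1) * 2 ^ ℓ), {ω | H i ω = y} := by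
      ext ω
      simp [hAdef, Finset.mem_Ico, eq_comm]
    rw [hset, measure_biUnion_finset]
    · rw [Finset.sum_congr rfl (fun y hy => hunif i y (lt_of_lt_of_le (Finset.mem_Ico.1 hy).2 hI)),
        Finset.sum_const, Nat.card_Ico]
      have hcard : (a + 1) * 2 ^ ℓ - a * 2 ^ ℓ = 2 ^ ℓ := by
        rw [add_mul, one_mul, Nat.add_sub_cancel_left]
      rw [hcard, nsmul_eq_mul, div_eq_mul_inv]
      push_cast
      ring
    · intro x _ y _ hxy
      simp only [Function.onFun, Set.disjoint_left, Set.mem_setOf_eq]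
      intro ω h1 h2
      exact hxy (h1.symm.trans h2)
    · exact fun y _ => (hmeas i) (measurableSet_singleton y)
  have hpA : ∀ i, (μ (A i)).toReal = p := by
    intro i
    rw [hμA i, hpdef, ENNReal.toReal_div]
    simp
  -- moments
  have hmom : ∀ (i : Fin n) (k : ℕ),
      ∫ ω, Z i ω ^ k ∂μ = p * (1 - p) ^ k + (1 - p) * (-p) ^ k := by
    intro i k
    have hfe : (fun ω => Z i ω ^ k)
        = fun ω => (A i).indicator (fun _ => ((1 - p) ^ k - (-p) ^ k)) ω + (-p) ^ k := by
      funext ω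
      by_cases h : ω ∈ A i
      · have hcond : a * 2 ^ ℓ ≤ H i ω ∧ H i ω < (a + 1) * 2 ^ ℓ := h
        have hZ : Z i ω = 1 - p := by simp [hZdef, hφdef, hcond]
        rw [Set.indicator_of_mem h, hZ]; ring
      · have hcond : ¬(a * 2 ^ ℓ ≤ H i ω ∧ H i ω < (a + 1) * 2 ^ ℓ) := h
        have hZ : Z i ω = -p := by simp [hZdef, hφdef, hcond]
        rw [Set.indicator_of_notMem h, hZ]; ring
    rw [hfe, integral_add ((integrable_const _).indicator (hAmeas i)) (integrable_const _),
      integral_indicator_const _ (hAmeas i), integral_const, probReal_univ]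
    simp [measureReal_def, hpA i, smul_eq_mul]
    ring
  have hm1 : ∀ i, ∫ ω, Z i ω ∂μ = 0 := by
    intro i
    have h := hmom i 1
    simp only [pow_one] at h
    rw [h]; ring
  have hm2 : ∀ i, ∫ ω, Z i ω ^ 2 ∂μ = p - p ^ 2 := by
    intro i
    rw [hmom i 2]; ring
  have hm4 : ∀ i, ∫ ω, Z i ω ^ 4 ∂μ ≤ p := by
    intro i
    rw [hmom i 4]
    nlinarith [hp0, hp1, sq_nonneg p, sq_nonneg (1-p)]
  -- independence transfer
  have hZind : ∀ s : Finset (Fin n), s.card ≤ 4 →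
      iIndepFun (fun i : s => Z i.1) μ := by
    intro s hs
    exact (hind s hs).comp (fun _ => φf) (fun _ => Measurable.of_discrete)
  -- integrability of quadruple products
  have hbd4 : ∀ (b c d e : Fin n) ω, ‖Z b ω * Z c ω * Z d ω * Z e ω‖ ≤ 1 := by
    intro b c d e ω
    rw [norm_mul, norm_mul, norm_mul]
    exact mul_le_one₀ (mul_le_one₀ (mul_le_one₀ (hZbd b ω) (norm_nonneg _) (hZbd c ω))
      (norm_nonneg _) (hZbd d ω)) (norm_nonneg _) (hZbd e ω)
  have hint4 : ∀ b c d e : Fin n, Integrable (fun ω => Z b ω * Z c ω * Z d ω * Z e ω) μ := by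
    intro b c d e
    exact aux_intbd14 μ _ 1 (((hZmeas b).mul (hZmeas c)).mul (hZmeas d) |>.mul (hZmeas e))
      (hbd4 b c d e)
  -- the per-term bound
  have hT : ∀ b c d e : Fin n, ∫ ω, Z b ω * Z c ω * Z d ω * Z e ω ∂μ ≤
      (if b = c ∧ d = e then p ^ 2 else 0) + (if b = d ∧ c = e then p ^ 2 else 0)
      + (if b = e ∧ c = d then p ^ 2 else 0)
      + (if b = c ∧ c = d ∧ d = e then p - 3 * p ^ 2 else 0) := by
    intro b c d e
    have hsq : ∀ x y : Fin n, x ≠ y →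
        ∫ ω, Z x ω ^ 2 * Z y ω ^ 2 ∂μ = (p - p ^ 2) ^ 2 := by
      intro x y hxy
      rw [aux_sq_sq14 μ Z hZmeas hZind hZbd x y hxy, hm2 x, hm2 y]
      ring
    have hsqle : (p - p ^ 2) ^ 2 ≤ p ^ 2 := by
      nlinarith [mul_nonneg (mul_nonneg (mul_nonneg hp0 hp0) hp0) (by linarith : (0:ℝ) ≤ 2 - p)]
    by_cases h1 : b = c ∧ d = e
    · obtain ⟨rfl, rfl⟩ := h1
      by_cases h2 : b = d
      · subst h2
        have he : ∫ ω, Z b ω * Z b ω * Z b ω * Z b ω ∂μ = ∫ ω, Z b ω ^ 4 ∂μ :=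
          integral_congr_ae (Filter.Eventually.of_forall fun ω => by ring)
        rw [he]
        simp
        linarith [hm4 b]
      · have he : ∫ ω, Z b ω * Z b ω * Z d ω * Z d ω ∂μ = ∫ ω, Z b ω ^ 2 * Z d ω ^ 2 ∂μ :=
          integral_congr_ae (Filter.Eventually.of_forall fun ω => by ring)
        rw [he, hsq b d h2]
        simp [h2]
        linarith [hsqle]
    · by_cases h2 : b = d ∧ c = e
      · obtain ⟨rfl, rfl⟩ := h2
        have hbc : b ≠ c := fun h => h1 ⟨h, h⟩
        have he : ∫ ω, Z b ω * Z c ω * Z b ω * Z c ω ∂μ = ∫ ω, Z b ω ^ 2 * Z c ω ^ 2 ∂μ :=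
          integral_congr_ae (Filter.Eventually.of_forall fun ω => by ring)
        rw [he, hsq b c hbc]
        simp [hbc]
        linarith [hsqle]
      · by_cases h3 : b = e ∧ c = d
        · obtain ⟨rfl, rfl⟩ := h3
          have hbc : b ≠ c := fun h => h1 ⟨h, h.symm ▸ h.symm⟩
          have he : ∫ ω, Z b ω * Z c ω * Z c ω * Z b ω ∂μ = ∫ ω, Z b ω ^ 2 * Z c ω ^ 2 ∂μ :=
            integral_congr_ae (Filter.Eventually.of_forall fun ω => by ring)
          rw [he, hsq b c hbc]
          simp [hbc]
          linarith [hsqle]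
        · rcases aux_singleton14 h1 h2 h3 with hb | hc | hd | he
          · have h0 : ∫ ω, Z b ω * Z c ω * Z d ω * Z e ω ∂μ = 0 :=
              aux_prod4_zero14 μ Z hZmeas hZind hZbd hm1 b c d e hb.1 hb.2.1 hb.2.2
            rw [h0]
            simp [hb.1, hb.2.1, hb.2.2]
          · have hre : ∫ ω, Z b ω * Z c ω * Z d ω * Z e ω ∂μ
                = ∫ ω, Z c ω * Z b ω * Z d ω * Z e ω ∂μ :=
              integral_congr_ae (Filter.Eventually.of_forall fun ω => by ring)
            rw [hre, aux_prod4_zero14 μ Z hZmeas hZind hZbd hm1 c b d e hc.1 hc.2.1 hc.2.2]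
            simp [(hc.1).symm, hc.2.1, hc.2.2]
          · have hre : ∫ ω, Z b ω * Z c ω * Z d ω * Z e ω ∂μ
                = ∫ ω, Z d ω * Z b ω * Z c ω * Z e ω ∂μ :=
              integral_congr_ae (Filter.Eventually.of_forall fun ω => by ring)
            rw [hre, aux_prod4_zero14 μ Z hZmeas hZind hZbd hm1 d b c e hd.1 hd.2.1 hd.2.2]
            simp [(hd.1).symm, (hd.2.1).symm, hd.2.2]
          · have hre : ∫ ω, Z b ω * Z c ω * Z d ω * Z e ω ∂μ
                = ∫ ω, Z e ω * Z b ω * Z c ω * Z d ω ∂μ :=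
              integral_congr_ae (Filter.Eventually.of_forall fun ω => by ring)
            rw [hre, aux_prod4_zero14 μ Z hZmeas hZind hZbd hm1 e b c d he.1 he.2.1 he.2.2]
            simp [(he.1).symm, (he.2.1).symm, (he.2.2).symm]
  -- the centered sum
  set X : Ω → ℝ := fun ω => ∑ i, Z i ω with hXdef
  have hXmeas : Measurable X := Finset.measurable_sum _ fun i _ => hZmeas i
  have hXbd : ∀ ω, ‖X ω‖ ≤ n := by
    intro ω
    calc ‖∑ i, Z i ω‖ ≤ ∑ i : Fin n, ‖Z i ω‖ := norm_sum_le _ _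
    _ ≤ ∑ _i : Fin n, 1 := Finset.sum_le_sum fun i _ => hZbd i ω
    _ = n := by simp
  have hX4int : Integrable (fun ω => X ω ^ 4) μ := by
    refine aux_intbd14 μ _ ((n:ℝ) ^ 4) (hXmeas.pow_const 4) fun ω => ?_
    rw [norm_pow]
    exact pow_le_pow_left₀ (norm_nonneg _) (hXbd ω) 4
  -- expansion
  have hpt : ∀ ω, X ω ^ 4 = ∑ i, ∑ j, ∑ k, ∑ l, Z l ω * Z k ω * Z j ω * Z i ω := by
    intro ω
    simp only [hXdef]
    simp only [show (4:ℕ) = 3+1 from rfl, show (3:ℕ) = 2+1 from rfl, pow_succ, pow_zero,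
      one_mul, Finset.sum_mul, Finset.mul_sum]
  have hswap : ∫ ω, X ω ^ 4 ∂μ
      = ∑ i, ∑ j, ∑ k, ∑ l, ∫ ω, Z l ω * Z k ω * Z j ω * Z i ω ∂μ := by
    simp only [hpt]
    rw [integral_finset_sum _ fun i _ => integrable_finset_sum _ fun j _ =>
      integrable_finset_sum _ fun k _ => integrable_finset_sum _ fun l _ => hint4 l k j i]
    refine Finset.sum_congr rfl fun i _ => ?_
    rw [integral_finset_sum _ fun j _ => integrable_finset_sum _ fun k _ =>
      integrable_finset_sum _ fun l _ => hint4 l k j i]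
    refine Finset.sum_congr rfl fun j _ => ?_
    rw [integral_finset_sum _ fun k _ => integrable_finset_sum _ fun l _ => hint4 l k j i]
    refine Finset.sum_congr rfl fun k _ => ?_
    rw [integral_finset_sum _ fun l _ => hint4 l k j i]
  have hcount : (∑ _i : Fin n, ∑ _j : Fin n, ∑ _k : Fin n, ∑ _l : Fin n, (0:ℝ)) = 0 := by simp
  have hE4 : ∫ ω, X ω ^ 4 ∂μ ≤ 3 * ((n:ℝ) * p) ^ 2 + n * p := by
    rw [hswap]
    calc (∑ i, ∑ j, ∑ k, ∑ l, ∫ ω, Z l ω * Z k ω * Z j ω * Z i ω ∂μ)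
        ≤ ∑ i : Fin n, ∑ j : Fin n, ∑ k : Fin n, ∑ l : Fin n,
          ((if l = k ∧ j = i then p ^ 2 else 0) + (if l = j ∧ k = i then p ^ 2 else 0)
          + (if l = i ∧ k = j then p ^ 2 else 0)
          + (if l = k ∧ k = j ∧ j = i then p - 3 * p ^ 2 else 0)) :=
          Finset.sum_le_sum fun i _ => Finset.sum_le_sum fun j _ =>
            Finset.sum_le_sum fun k _ => Finset.sum_le_sum fun l _ => hT l k j i
    _ = 3 * ((n:ℝ) ^ 2 * p ^ 2) + n * (p - 3 * p ^ 2) := by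
        simp [Finset.sum_add_distrib, ite_and, Finset.sum_ite_eq, Finset.sum_ite_eq',
          Finset.sum_const, Finset.card_univ]
        ring
    _ ≤ 3 * ((n:ℝ) * p) ^ 2 + n * p := by
        have hnn : (0:ℝ) ≤ (n:ℝ) := Nat.cast_nonneg n
        nlinarith [mul_nonneg hnn (mul_nonneg hp0 hp0)]
  -- Markov
  set c4 : ℝ := (1 / 12 * 2 ^ ℓ) ^ 4 with hc4def
  have hc4pos : 0 < c4 := by rw [hc4def]; positivity
  have hsub : {ω : Ω | (3 : ℝ) / 4 * 2 ^ ℓ ≤ ((Finset.univ.filter fun i : Fin n =>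
          a * 2 ^ ℓ ≤ H i ω ∧ H i ω < (a + 1) * 2 ^ ℓ).card : ℝ)}
      ⊆ {ω : Ω | c4 ≤ X ω ^ 4} := by
    intro ω hω
    simp only [Set.mem_setOf_eq] at hω ⊢
    have hXω : X ω = ((Finset.univ.filter fun i : Fin n =>
        a * 2 ^ ℓ ≤ H i ω ∧ H i ω < (a + 1) * 2 ^ ℓ).card : ℝ) - n * p := by
      simp only [hXdef, hZdef, hφdef]
      rw [Finset.sum_sub_distrib, Finset.sum_const, Finset.card_univ, Fintype.card_fin,
        nsmul_eq_mul, Finset.sum_boole]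
    have h1 : 1 / 12 * 2 ^ ℓ ≤ X ω := by rw [hXω]; linarith [hnp]
    have h2 : (0:ℝ) ≤ 1 / 12 * 2 ^ ℓ := by positivity
    rw [hc4def]
    exact pow_le_pow_left₀ h2 h1 4
  have hmarkov := mul_meas_ge_le_integral_of_nonneg (μ := μ) (f := fun ω => X ω ^ 4)
    (Filter.Eventually.of_forall fun ω => by positivity) hX4int c4
  refine le_trans (ENNReal.toReal_mono (measure_ne_top μ _) (measure_mono hsub)) ?_
  have step2 : (μ {ω | c4 ≤ X ω ^ 4}).toReal ≤ (∫ ω, X ω ^ 4 ∂μ) / c4 := by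
    rw [le_div_iff₀ hc4pos]
    calc (μ {ω | c4 ≤ X ω ^ 4}).toReal * c4 = c4 * (μ {ω | c4 ≤ X ω ^ 4}).toReal := by ring
    _ ≤ ∫ ω, X ω ^ 4 ∂μ := hmarkov
  refine le_trans step2 (le_trans ((div_le_div_iff_of_pos_right hc4pos).mpr hE4) ?_)
  -- final numeric bound
  have hRge : (2:ℝ) ≤ 2 ^ ℓ := by
    calc (2:ℝ) = 2 ^ 1 := (pow_one 2).symm
    _ ≤ 2 ^ ℓ := pow_le_pow_right₀ one_le_two hlpos
  have hR0 : (0:ℝ) < 2 ^ ℓ := by positivity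
  have h2l : (2:ℝ) ^ (2 * ℓ) = (2 ^ ℓ) ^ 2 := by rw [two_mul, pow_add]; ring
  rw [hc4def, div_le_div_iff₀ (by positivity) (by positivity), h2l]
  have hA : ((n:ℝ) * p) ^ 2 ≤ (2 / 3 * 2 ^ ℓ) ^ 2 := pow_le_pow_left₀ hnp0 hnp 2
  have hB : ((n:ℝ) * p) * ((2:ℝ) ^ ℓ) ^ 2 ≤ (2 / 3 * 2 ^ ℓ) * ((2:ℝ) ^ ℓ) ^ 2 :=
    mul_le_mul_of_nonneg_right hnp (by positivity)
  have hD : ((n:ℝ) * p) ^ 2 * ((2:ℝ) ^ ℓ) ^ 2 ≤ (2 / 3 * 2 ^ ℓ) ^ 2 * ((2:ℝ) ^ ℓ) ^ 2 :=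
    mul_le_mul_of_nonneg_right hA (by positivity)
  have hC : 2 * ((2:ℝ) ^ ℓ) ^ 3 ≤ 2 ^ ℓ * ((2:ℝ) ^ ℓ) ^ 3 :=
    mul_le_mul_of_nonneg_right hRge (by positivity)
  nlinarith [hB, hC, hD]
end

section
/- Fix a hash function h : U → [t] and a starting location j ∈ [t]. Insert a sequence of distinct keys x_1, ..., x_n into a linear probing table (each key x is placed at the first empty location at or after h(x), with no wrap-around). If instead only a subsequence x_{i_1}, ..., x_{i_m} (with i_1 < ... < i_m) is inserted, then the set of keys occupying locations from j up to the first empty location (in the subsequence table) is a subset of the corresponding set when the full sequence is inserted. -/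
/-- The first empty location at or after `h` in the table `T` (locations are naturals:
no wrap-around). -/
noncomputable def firstEmpty {K : Type*} (T : ℕ → Option K) (h : ℕ) : ℕ :=
  sInf {j | h ≤ j ∧ T j = none}

/-- Linear probing insertion of a single key `x`: place `x` at the first empty location at
or after `hash x`. -/
noncomputable def insertKey {K : Type*} (hash : K → ℕ) (T : ℕ → Option K) (x : K) :
    ℕ → Option K :=
  Function.update T (firstEmpty T (hash x)) (some x)

/-- Insert a sequence of keys into the initially empty linear probing table. -/
noncomputable def insertList {K : Type*} (hash : K → ℕ) (xs : List K) : ℕ → Option K :=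
  xs.foldl (insertKey hash) (fun _ => none)

/-- The set of keys occupying the consecutive filled locations from `j` up to (but not
including) the first empty location at or after `j`. -/
def scanSet {K : Type*} (T : ℕ → Option K) (j : ℕ) : Set K :=
  {x | ∃ i, j ≤ i ∧ i < firstEmpty T j ∧ T i = some x}

namespace LPMono

variable {K : Type*}

/-- The table has only finitely many occupied cells. -/
def FinOcc (T : ℕ → Option K) : Prop := {i | T i ≠ none}.Finite

lemma finOcc_empty : FinOcc (fun _ => (none : Option K)) := by
  simp [FinOcc]

lemma fe_spec {T : ℕ → Option K} (hf : FinOcc T) (h : ℕ) :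
    h ≤ firstEmpty T h ∧ T (firstEmpty T h) = none := by
  have hne : {j | h ≤ j ∧ T j = none}.Nonempty := by
    have hfin : ({i | T i ≠ none} ∪ Set.Iio h).Finite := hf.union (Set.finite_Iio h)
    obtain ⟨k, hk⟩ := hfin.infinite_compl.nonempty
    simp only [Set.mem_compl_iff, Set.mem_union, Set.mem_setOf_eq, Set.mem_Iio, not_or,
      not_not, not_lt] at hk
    exact ⟨k, hk.2, hk.1⟩
  exact Nat.sInf_mem hne

lemma fe_le {T : ℕ → Option K} {h k : ℕ} (h1 : h ≤ k) (h2 : T k = none) :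
    firstEmpty T h ≤ k :=
  Nat.sInf_le ⟨h1, h2⟩

lemma finOcc_insert (hash : K → ℕ) {T : ℕ → Option K} (hf : FinOcc T) (x : K) :
    FinOcc (insertKey hash T x) := by
  apply (hf.insert (firstEmpty T (hash x))).subset
  intro i hi
  by_cases hif : i = firstEmpty T (hash x)
  · exact Or.inl hif
  · right
    simpa [insertKey, Function.update_of_ne hif] using hi

/-- Every stored key has `hash x ≤ ℓ` and a contiguous run of occupied cells from
`hash x` to its location `ℓ`. -/
def Valid (hash : K → ℕ) (T : ℕ → Option K) : Prop :=
  ∀ x ℓ, T ℓ = some x → hash x ≤ ℓ ∧ ∀ k, hash x ≤ k → k ≤ ℓ → T k ≠ none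

lemma valid_empty (hash : K → ℕ) : Valid hash (fun _ => (none : Option K)) := by
  intro x ℓ h; simp at h

lemma valid_insert (hash : K → ℕ) {T : ℕ → Option K} (hv : Valid hash T) (hf : FinOcc T)
    (x : K) : Valid hash (insertKey hash T x) := by
  set f := firstEmpty T (hash x) with hfdef
  have hspec := fe_spec hf (hash x)
  intro y ℓ hℓ
  by_cases hlf : ℓ = f
  · have hy : y = x := by
      rw [hlf] at hℓ
      simpa [insertKey, Function.update_self, ← hfdef] using hℓ.symm
    refine ⟨hy ▸ hlf ▸ hspec.1, fun k hk1 hk2 => ?_⟩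
    by_cases hkf : k = f
    · rw [hkf, hfdef]; simp [insertKey, Function.update_self]
    · have hkl : k < f := lt_of_le_of_ne (hlf ▸ hk2) hkf
      have hk1' : hash x ≤ k := hy ▸ hk1
      have : T k ≠ none := by
        intro hnone
        exact absurd (fe_le hk1' hnone) (not_le.mpr hkl)
      simpa [insertKey, Function.update_of_ne hkf, ← hfdef] using this
  · have hT : T ℓ = some y := by
      simpa [insertKey, Function.update_of_ne hlf, ← hfdef] using hℓ
    obtain ⟨h1, h2⟩ := hv y ℓ hT
    refine ⟨h1, fun k hk1 hk2 => ?_⟩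
    by_cases hkf : k = f
    · rw [hkf, hfdef]; simp [insertKey, Function.update_self]
    · have := h2 k hk1 hk2
      simpa [insertKey, Function.update_of_ne hkf, ← hfdef] using this

/-- The simulation relation: every cell empty in the big table is empty in the small
table, and each key stored in the small table is stored at a ≥ location in the
big table. -/
def Rel (Ty Tx : ℕ → Option K) : Prop :=
  (∀ i, Tx i = none → Ty i = none) ∧
  (∀ x i, Ty i = some x → ∃ i', i ≤ i' ∧ Tx i' = some x)

lemma rel_insert_right (hash : K → ℕ) {Ty Tx : ℕ → Option K} (hr : Rel Ty Tx)
    (hfx : FinOcc Tx) (z : K) : Rel Ty (insertKey hash Tx z) := by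
  set f := firstEmpty Tx (hash z) with hfdef
  have hspec := fe_spec hfx (hash z)
  constructor
  · intro i hi
    by_cases hif : i = f
    · exfalso
      rw [hif] at hi
      simp [insertKey, Function.update_self, ← hfdef] at hi
    · apply hr.1
      simpa [insertKey, Function.update_of_ne hif, ← hfdef] using hi
  · intro x i hi
    obtain ⟨i', hii', hTx⟩ := hr.2 x i hi
    refine ⟨i', hii', ?_⟩
    have hif : i' ≠ f := by
      intro h; rw [h] at hTx; rw [hspec.2] at hTx; cases hTx
    simpa [insertKey, Function.update_of_ne hif, ← hfdef] using hTx

lemma rel_insert_both (hash : K → ℕ) {Ty Tx : ℕ → Option K} (hr : Rel Ty Tx)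
    (hfy : FinOcc Ty) (hfx : FinOcc Tx) (x : K) :
    Rel (insertKey hash Ty x) (insertKey hash Tx x) := by
  set fy := firstEmpty Ty (hash x) with hfy'
  set fx := firstEmpty Tx (hash x) with hfx'
  have hsy := fe_spec hfy (hash x)
  have hsx := fe_spec hfx (hash x)
  have hyx : fy ≤ fx := fe_le hsx.1 (hr.1 _ hsx.2)
  constructor
  · intro i hi
    have hifx : i ≠ fx := by
      intro h; rw [h] at hi; simp [insertKey, Function.update_self, ← hfx', ← hfy'] at hi
    have hTx : Tx i = none := by
      simpa [insertKey, Function.update_of_ne hifx, ← hfx', ← hfy'] using hi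
    have hTy : Ty i = none := hr.1 _ hTx
    have hify : i ≠ fy := by
      intro h
      apply hifx
      rw [h]
      have hxy : fx ≤ fy := fe_le hsy.1 (h ▸ hTx)
      exact le_antisymm hyx hxy
    simp [insertKey, Function.update_of_ne hify, hTy, ← hfx', ← hfy']
  · intro y i hi
    by_cases hify : i = fy
    · subst hify
      have hy : y = x := by
        simpa [insertKey, Function.update_self, ← hfx', ← hfy'] using hi.symm
      subst hy
      exact ⟨fx, hyx, by simp [insertKey, Function.update_self, ← hfx', ← hfy']⟩
    · have hTy : Ty i = some y := by
        simpa [insertKey, Function.update_of_ne hify, ← hfx', ← hfy'] using hi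
      obtain ⟨i', hii', hTx⟩ := hr.2 y i hTy
      have hifx : i' ≠ fx := by
        intro h; rw [h, hsx.2] at hTx; cases hTx
      exact ⟨i', hii', by simpa [insertKey, Function.update_of_ne hifx, ← hfx', ← hfy'] using hTx⟩

lemma fold_rel (hash : K → ℕ) : ∀ {ys xs : List K}, ys.Sublist xs →
    ∀ Ty Tx : ℕ → Option K, FinOcc Ty → FinOcc Tx → Rel Ty Tx →
    Rel (ys.foldl (insertKey hash) Ty) (xs.foldl (insertKey hash) Tx) := by
  intro ys xs hsub
  induction hsub with
  | slnil => intro Ty Tx _ _ hr; exact hr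
  | cons z hs ih =>
    intro Ty Tx hfy hfx hr
    simpa using ih Ty (insertKey hash Tx z) hfy (finOcc_insert hash hfx z)
      (rel_insert_right hash hr hfx z)
  | cons_cons z hs ih =>
    intro Ty Tx hfy hfx hr
    simpa using ih (insertKey hash Ty z) (insertKey hash Tx z)
      (finOcc_insert hash hfy z) (finOcc_insert hash hfx z)
      (rel_insert_both hash hr hfy hfx z)

lemma fold_finOcc (hash : K → ℕ) : ∀ (xs : List K) (T : ℕ → Option K), FinOcc T →
    FinOcc (xs.foldl (insertKey hash) T) := by
  intro xs
  induction xs with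
  | nil => intro T h; exact h
  | cons z xs ih =>
    intro T h
    simpa using ih (insertKey hash T z) (finOcc_insert hash h z)

lemma fold_valid (hash : K → ℕ) : ∀ (xs : List K) (T : ℕ → Option K), FinOcc T →
    Valid hash T → Valid hash (xs.foldl (insertKey hash) T) := by
  intro xs
  induction xs with
  | nil => intro T _ h; exact h
  | cons z xs ih =>
    intro T hf h
    simpa using ih (insertKey hash T z) (finOcc_insert hash hf z)
      (valid_insert hash h hf z)

end LPMono

/-- Monotonicity of linear probing: inserting only a subsequence of a sequence of distinct
keys yields, for every starting location `j`, a scan set contained in the scan set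
obtained when the full sequence is inserted. -/
theorem stmt16 {K : Type*} (hash : K → ℕ) (xs ys : List K) (hnodup : xs.Nodup)
    (hsub : ys.Sublist xs) (j : ℕ) :
    scanSet (insertList hash ys) j ⊆ scanSet (insertList hash xs) j := by
  classical
  set Ty := insertList hash ys with hTy
  set Tx := insertList hash xs with hTx
  have hfy : LPMono.FinOcc Ty := LPMono.fold_finOcc hash ys _ LPMono.finOcc_empty
  have hfx : LPMono.FinOcc Tx := LPMono.fold_finOcc hash xs _ LPMono.finOcc_empty
  have hvy : LPMono.Valid hash Ty :=
    LPMono.fold_valid hash ys _ LPMono.finOcc_empty (LPMono.valid_empty hash)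
  have hvx : LPMono.Valid hash Tx :=
    LPMono.fold_valid hash xs _ LPMono.finOcc_empty (LPMono.valid_empty hash)
  have hrel : LPMono.Rel Ty Tx := by
    apply LPMono.fold_rel hash hsub _ _ LPMono.finOcc_empty LPMono.finOcc_empty
    exact ⟨fun i _ => rfl, fun x i h => by cases h⟩
  intro x hx
  obtain ⟨i, hji, hiFy, hTi⟩ := hx
  have hsx := LPMono.fe_spec hfx j
  -- firstEmpty Ty j ≤ firstEmpty Tx j
  have hFyFx : firstEmpty Ty j ≤ firstEmpty Tx j :=
    LPMono.fe_le hsx.1 (hrel.1 _ hsx.2)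
  obtain ⟨i', hii', hTxi'⟩ := hrel.2 x i hTi
  have hhx : hash x ≤ i := (hvy x i hTi).1
  have hhxFx : hash x ≤ firstEmpty Tx j := le_trans hhx (le_trans (le_of_lt hiFy) hFyFx)
  have hi'lt : i' < firstEmpty Tx j := by
    by_contra hge
    push_neg at hge
    exact (hvx x i' hTxi').2 (firstEmpty Tx j) hhxFx hge hsx.2
  exact ⟨i', le_trans hji hii', hi'lt, hTxi'⟩
end

section
/- Consider a linear probing table with n keys stored and a run R (maximal interval of consecutive filled positions) of length r ≥ 2^{ℓ+2}. Then among the first four dyadic ℓ-intervals intersecting R, at least one interval I has at least 3·2^ℓ/4 of the non-query keys hashing into I. -/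
/-- Consider a linear probing table (locations `0, ..., t-1`, no wrap-around) containing a
run `R = [s, s+r)` of consecutive filled positions of length `r ≥ 2^{ℓ+2}`: every position
of `R` is filled, each key stored at position `i` of `R` has its hash in `[s, i]` (the
position before the run is empty), and distinct positions hold distinct keys. Then among
the first four dyadic `ℓ`-intervals intersecting `R` (the `m`-th being
`[(⌊s/2^ℓ⌋+m)·2^ℓ, (⌊s/2^ℓ⌋+m+1)·2^ℓ)` for `m = 0,1,2,3`), at least one interval `I` has
at least `3·2^ℓ/4` of the stored keys other than the query key `q` hashing into `I`. -/
theorem stmt17 {K : Type*} (t : ℕ) (T : Fin t → Option K) (hash : K → ℕ) (q : K)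
    (s r ℓ : ℕ) (hr : 2 ^ (ℓ + 2) ≤ r) (hst : s + r ≤ t)
    (hfilled : ∀ i : Fin t, s ≤ (i : ℕ) → (i : ℕ) < s + r → (T i).isSome)
    (hhash : ∀ (i : Fin t) (x : K), T i = some x → s ≤ (i : ℕ) → (i : ℕ) < s + r →
      s ≤ hash x ∧ hash x ≤ (i : ℕ))
    (hinj : ∀ (i j : Fin t) (x : K), T i = some x → T j = some x → i = j) :
    ∃ m < 4, (3 : ℝ) * 2 ^ ℓ / 4 ≤
      ({x : K | x ≠ q ∧ (∃ i, T i = some x) ∧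
        (s / 2 ^ ℓ + m) * 2 ^ ℓ ≤ hash x ∧
        hash x < (s / 2 ^ ℓ + m + 1) * 2 ^ ℓ}.ncard : ℝ) := by
  classical
  set E := 2 ^ ℓ with hE
  have hEpos : 0 < E := pow_pos (by norm_num) ℓ
  set d := s / E with hd
  set B := (d + 4) * E with hB
  have hdm : d * E + s % E = s := by rw [mul_comm]; exact Nat.div_add_mod s E
  have hmod : s % E < E := Nat.mod_lt _ hEpos
  have h4E : (2:ℕ) ^ (ℓ + 2) = 4 * E := by rw [hE]; ring
  have hBeq : B = d * E + 4 * E := by rw [hB]; ring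
  have hsB : s + (3 * E + 1) ≤ B := by omega
  have hBsr : B ≤ s + r := by omega
  have hBt : B ≤ t := le_trans hBsr hst
  set g : ℕ → K := fun i => if h : i < t then (T ⟨i, h⟩).getD q else q with hgdef
  have hg : ∀ i (hi : i < t), s ≤ i → i < B → T ⟨i, hi⟩ = some (g i) := by
    intro i hi h1 h2
    have hs := hfilled ⟨i, hi⟩ h1 (lt_of_lt_of_le h2 hBsr)
    obtain ⟨x, hx⟩ := Option.isSome_iff_exists.mp hs
    simp only [hgdef, dif_pos hi, hx, Option.getD_some]
  set S : ℕ → Set K := fun m => {x : K | x ≠ q ∧ (∃ i, T i = some x) ∧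
        (d + m) * E ≤ hash x ∧ hash x < (d + m + 1) * E} with hS
  have hKfin : {x : K | ∃ i, T i = some x}.Finite := by
    apply Set.Finite.subset (Set.finite_range (fun i : Fin t => (T i).getD q))
    rintro x ⟨i, hi⟩
    exact ⟨i, by simp [hi]⟩
  have hSfin : ∀ m, (S m).Finite := by
    intro m
    apply hKfin.subset
    rintro x ⟨-, hx, -⟩
    exact hx
  set Q : Finset K := (Finset.Ico s B).image g with hQ
  have hQcard : Q.card = B - s := by
    rw [hQ, Finset.card_image_of_injOn, Nat.card_Ico]
    intro i hi j hj hij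
    simp only [Finset.coe_Ico, Set.mem_Ico] at hi hj
    have hit : i < t := lt_of_lt_of_le hi.2 hBt
    have hjt : j < t := lt_of_lt_of_le hj.2 hBt
    have h1 := hg i hit hi.1 hi.2
    have h2 := hg j hjt hj.1 hj.2
    rw [hij] at h1
    exact congrArg Fin.val (hinj _ _ _ h1 h2)
  have hcover : ((Q.erase q : Finset K) : Set K) ⊆ S 0 ∪ S 1 ∪ S 2 ∪ S 3 := by
    intro x hx
    simp only [Finset.coe_erase, Set.mem_diff, Set.mem_singleton_iff, Finset.mem_coe] at hx
    obtain ⟨hxQ, hxq⟩ := hx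
    rw [hQ, Finset.mem_image] at hxQ
    obtain ⟨i, hi, hgi⟩ := hxQ
    rw [Finset.mem_Ico] at hi
    have hit : i < t := lt_of_lt_of_le hi.2 hBt
    have hT : T ⟨i, hit⟩ = some x := by rw [hg i hit hi.1 hi.2, hgi]
    have hh := hhash ⟨i, hit⟩ x hT hi.1 (lt_of_lt_of_le hi.2 hBsr)
    have hhB : hash x < B := lt_of_le_of_lt hh.2 hi.2
    -- x ∈ S (hash x / E - d)
    have hk1 : d ≤ hash x / E := Nat.div_le_div_right hh.1
    have hk2 : hash x / E < d + 4 := by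
      rw [Nat.div_lt_iff_lt_mul hEpos]
      calc hash x < B := hhB
        _ = (d + 4) * E := hB
    have hlo : (hash x / E) * E ≤ hash x := Nat.div_mul_le_self _ _
    have hhi : hash x < (hash x / E + 1) * E := by
      have h1 := Nat.div_add_mod (hash x) E
      have h2 := Nat.mod_lt (hash x) hEpos
      have h3 : (hash x / E + 1) * E = E * (hash x / E) + E := by ring
      omega
    have hm : x ∈ S (hash x / E - d) := by
      refine ⟨hxq, ⟨⟨i, hit⟩, hT⟩, ?_, ?_⟩
      · have : d + (hash x / E - d) = hash x / E := by omega
        rw [this]; exact hlo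
      · have : d + (hash x / E - d) + 1 = hash x / E + 1 := by omega
        rw [this]; exact hhi
    obtain ⟨m, hm4, hmem⟩ : ∃ m, m < 4 ∧ x ∈ S m := ⟨_, by omega, hm⟩
    interval_cases m
    · exact Or.inl (Or.inl (Or.inl hmem))
    · exact Or.inl (Or.inl (Or.inr hmem))
    · exact Or.inl (Or.inr hmem)
    · exact Or.inr hmem
  -- counting
  have hcount : 3 * E ≤ (S 0).ncard + (S 1).ncard + (S 2).ncard + (S 3).ncard := by
    have h1 : 3 * E ≤ (Q.erase q).card := by
      have := Finset.pred_card_le_card_erase (s := Q) (a := q)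
      omega
    have h2 : (Q.erase q).card ≤ (S 0 ∪ S 1 ∪ S 2 ∪ S 3).ncard := by
      rw [← Set.ncard_coe_finset]
      exact Set.ncard_le_ncard hcover
        ((((hSfin 0).union (hSfin 1)).union (hSfin 2)).union (hSfin 3))
    have h3 : (S 0 ∪ S 1 ∪ S 2 ∪ S 3).ncard ≤
        (S 0).ncard + (S 1).ncard + (S 2).ncard + (S 3).ncard := by
      calc (S 0 ∪ S 1 ∪ S 2 ∪ S 3).ncard
          ≤ (S 0 ∪ S 1 ∪ S 2).ncard + (S 3).ncard := Set.ncard_union_le _ _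
        _ ≤ (S 0 ∪ S 1).ncard + (S 2).ncard + (S 3).ncard := by
            have := Set.ncard_union_le (S 0 ∪ S 1) (S 2); omega
        _ ≤ (S 0).ncard + (S 1).ncard + (S 2).ncard + (S 3).ncard := by
            have := Set.ncard_union_le (S 0) (S 1); omega
    omega
  -- conclude
  by_contra hcon
  push_neg at hcon
  have key : ∀ m, m < 4 → ((S m).ncard : ℝ) < 3 * 2 ^ ℓ / 4 := by
    intro m hm
    exact hcon m hm
  have h0 := key 0 (by norm_num)
  have h1 := key 1 (by norm_num)
  have h2 := key 2 (by norm_num)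
  have h3 := key 3 (by norm_num)
  have hE' : ((E : ℝ)) = 2 ^ ℓ := by rw [hE]; push_cast; ring
  have hcR : (3 : ℝ) * 2 ^ ℓ ≤ ((S 0).ncard + (S 1).ncard + (S 2).ncard + (S 3).ncard : ℝ) := by
    rw [← hE']
    exact_mod_cast hcount
  linarith
end
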